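/- arXiv:2404.02736 — 5 statements merged into one kernel-verified Lean document; each statement's English description precedes it below -/
import Mathlib

section
/- Let 𝒵 be a finite type, m : ℕ, and z : Fin (m+1) → 𝒵. For p ∈ {0,…,m} and i, j ∈ 𝒵 with j ≠ i define the integer N j i p := card{k : 1 ≤ k ≤ p, z (k−1) = j ∧ z k = i}, and define the diagonal terms by N i i p := − Σ_{j ≠ i} N i j p. Then for all p, q ∈ {0,…,m} and all i₁, i₂ ∈ 𝒵: (if z p = i₁ then 1 else 0)·(if z q = i₂ then 1 else 0) = (if z 0 = i₁ then 1 else 0)·(if z 0 = i₂ then 1 else 0) + (if z 0 = i₂ then 1 else 0)·Σ_{k ∈ 𝒵} N k i₁ p + (if z 0 = i₁ then 1 else 0)·Σ_{k ∈ 𝒵} N k i₂ q + Σ_{k₁ ∈ 𝒵} Σ_{k₂ ∈ 𝒵} (N k₁ i₁ p)·(N k₂ i₂ q), as an equality of integers. -/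
open Finset
open Fin.NatCast

/-- The signed transition counting process of a finitary jump path: for `j ≠ i`,
`jumpCount m z j i p` is the number of transitions from `j` to `i` up to time `p`,
and on the diagonal we use the convention `N i i = - ∑_{j ≠ i} N i j`. -/
def jumpCount {𝒵 : Type*} [Fintype 𝒵] [DecidableEq 𝒵]
    (m : ℕ) (z : Fin (m + 1) → 𝒵) (j i : 𝒵) (p : ℕ) : ℤ :=
  if j = i then
    - ∑ l ∈ Finset.univ.filter (fun l => l ≠ i),
        (((Finset.Icc 1 p).filter
            (fun k : ℕ => z ((k - 1 : ℕ) : Fin (m + 1)) = i ∧ z ((k : ℕ) : Fin (m + 1)) = l)).card : ℤ)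
  else
    (((Finset.Icc 1 p).filter
        (fun k : ℕ => z ((k - 1 : ℕ) : Fin (m + 1)) = j ∧ z ((k : ℕ) : Fin (m + 1)) = i)).card : ℤ)

lemma univariate {𝒵 : Type*} [Fintype 𝒵] [DecidableEq 𝒵]
    (m : ℕ) (z : Fin (m + 1) → 𝒵) (i : 𝒵) :
    ∀ p : ℕ, (if z ((p : ℕ) : Fin (m + 1)) = i then (1 : ℤ) else 0)
      = (if z 0 = i then (1 : ℤ) else 0) + ∑ k : 𝒵, jumpCount m z k i p := by
  intro p
  induction p with
  | zero =>
    simp [jumpCount, Finset.Icc_eq_empty_of_lt]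
  | succ p ih =>
    have hins : Finset.Icc 1 (p + 1) = insert (p + 1) (Finset.Icc 1 p) := by
      ext x ; simp [Finset.mem_Icc, Finset.mem_insert] ; omega
    have hmem : p + 1 ∉ Finset.Icc 1 p := by simp
    have hcard : ∀ j l : 𝒵,
        (((Finset.Icc 1 (p+1)).filter
            (fun k : ℕ => z ((k - 1 : ℕ) : Fin (m + 1)) = j ∧ z ((k : ℕ) : Fin (m + 1)) = l)).card : ℤ)
        = (((Finset.Icc 1 p).filter
            (fun k : ℕ => z ((k - 1 : ℕ) : Fin (m + 1)) = j ∧ z ((k : ℕ) : Fin (m + 1)) = l)).card : ℤ)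
          + (if z ((p : ℕ) : Fin (m + 1)) = j ∧ z (((p+1 : ℕ)) : Fin (m + 1)) = l then 1 else 0) := by
      intro j l
      rw [hins, Finset.filter_insert]
      by_cases h : z ((p : ℕ) : Fin (m + 1)) = j ∧ z (((p+1 : ℕ)) : Fin (m + 1)) = l
      · rw [if_pos (by simpa using h), Finset.card_insert_of_notMem (fun hm => hmem (Finset.mem_of_mem_filter _ hm)), if_pos h]
        push_cast ; ring
      · rw [if_neg (by simpa using h), if_neg h] ; simp
    have key : ∑ k : 𝒵, jumpCount m z k i (p+1)
        = ∑ k : 𝒵, jumpCount m z k i p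
          + ((if z (((p+1:ℕ)) : Fin (m + 1)) = i then (1:ℤ) else 0)
            - (if z ((p : ℕ) : Fin (m + 1)) = i then (1:ℤ) else 0)) := by
      have expand : ∀ P : ℕ, ∑ k : 𝒵, jumpCount m z k i P
          = (∑ k ∈ Finset.univ.filter (fun k => k ≠ i),
              (((Finset.Icc 1 P).filter
                (fun k' : ℕ => z ((k' - 1 : ℕ) : Fin (m + 1)) = k ∧ z ((k' : ℕ) : Fin (m + 1)) = i)).card : ℤ))
            - ∑ l ∈ Finset.univ.filter (fun l => l ≠ i),
              (((Finset.Icc 1 P).filter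
                (fun k' : ℕ => z ((k' - 1 : ℕ) : Fin (m + 1)) = i ∧ z ((k' : ℕ) : Fin (m + 1)) = l)).card : ℤ) := by
        intro P
        rw [← Finset.sum_filter_add_sum_filter_not Finset.univ (fun k => k ≠ i)]
        have h1 : Finset.univ.filter (fun k : 𝒵 => ¬ k ≠ i) = {i} := by
          ext x ; simp
        rw [h1, Finset.sum_singleton]
        have h2 : ∀ k ∈ Finset.univ.filter (fun k : 𝒵 => k ≠ i), jumpCount m z k i P
            = (((Finset.Icc 1 P).filter
                (fun k' : ℕ => z ((k' - 1 : ℕ) : Fin (m + 1)) = k ∧ z ((k' : ℕ) : Fin (m + 1)) = i)).card : ℤ) := by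
          intro k hk
          simp only [Finset.mem_filter] at hk
          rw [jumpCount, if_neg hk.2]
        rw [Finset.sum_congr rfl h2, jumpCount, if_pos rfl]
        ring
      rw [expand, expand]
      have s1 : ∑ k ∈ Finset.univ.filter (fun k : 𝒵 => k ≠ i),
          (((Finset.Icc 1 (p+1)).filter
            (fun k' : ℕ => z ((k' - 1 : ℕ) : Fin (m + 1)) = k ∧ z ((k' : ℕ) : Fin (m + 1)) = i)).card : ℤ)
          = (∑ k ∈ Finset.univ.filter (fun k : 𝒵 => k ≠ i),
            (((Finset.Icc 1 p).filter
              (fun k' : ℕ => z ((k' - 1 : ℕ) : Fin (m + 1)) = k ∧ z ((k' : ℕ) : Fin (m + 1)) = i)).card : ℤ))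
            + (if z (((p+1:ℕ)) : Fin (m + 1)) = i ∧ z ((p : ℕ) : Fin (m + 1)) ≠ i then (1:ℤ) else 0) := by
        rw [Finset.sum_congr rfl (fun k _ => hcard k i), Finset.sum_add_distrib]
        congr 1
        by_cases h2 : z (((p+1:ℕ)) : Fin (m + 1)) = i
        · simp only [h2, eq_self_iff_true, and_true, true_and]
          rw [Finset.sum_ite_eq (Finset.univ.filter (fun k : 𝒵 => k ≠ i)) (z ((p : ℕ) : Fin (m + 1))) (fun _ => (1:ℤ))]
          simp only [Finset.mem_filter, Finset.mem_univ, true_and]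
        · simp only [h2, and_false, if_false, Finset.sum_const_zero, false_and, ite_false]
      have s2 : ∑ l ∈ Finset.univ.filter (fun l : 𝒵 => l ≠ i),
          (((Finset.Icc 1 (p+1)).filter
            (fun k' : ℕ => z ((k' - 1 : ℕ) : Fin (m + 1)) = i ∧ z ((k' : ℕ) : Fin (m + 1)) = l)).card : ℤ)
          = (∑ l ∈ Finset.univ.filter (fun l : 𝒵 => l ≠ i),
            (((Finset.Icc 1 p).filter
              (fun k' : ℕ => z ((k' - 1 : ℕ) : Fin (m + 1)) = i ∧ z ((k' : ℕ) : Fin (m + 1)) = l)).card : ℤ))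
            + (if z ((p : ℕ) : Fin (m + 1)) = i ∧ z (((p+1:ℕ)) : Fin (m + 1)) ≠ i then (1:ℤ) else 0) := by
        rw [Finset.sum_congr rfl (fun l _ => hcard i l), Finset.sum_add_distrib]
        congr 1
        by_cases h1 : z ((p : ℕ) : Fin (m + 1)) = i
        · simp only [h1, eq_self_iff_true, true_and]
          rw [Finset.sum_ite_eq (Finset.univ.filter (fun l : 𝒵 => l ≠ i)) (z (((p+1:ℕ)) : Fin (m + 1))) (fun _ => (1:ℤ))]
          simp only [Finset.mem_filter, Finset.mem_univ, true_and]
        · simp only [h1, false_and, if_false, Finset.sum_const_zero, ite_false]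
      rw [s1, s2]
      by_cases h1 : z ((p : ℕ) : Fin (m + 1)) = i <;>
        by_cases h2 : z (((p+1:ℕ)) : Fin (m + 1)) = i <;>
        simp only [h1, h2, ne_eq, eq_self_iff_true, not_true_eq_false, not_false_eq_true,
          and_true, and_false, true_and, false_and, if_true, if_false, ite_true, ite_false] <;>
        ring
    rw [key]
    linarith [ih]


/-- The bivariate indicator–counting identity: the product of two state indicators decomposes
into initial indicators, single sums of signed transition counts, and a double sum of products
of transition counts. -/
theorem bivariate_indicator_counting {𝒵 : Type*} [Fintype 𝒵] [DecidableEq 𝒵]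
    (m : ℕ) (z : Fin (m + 1) → 𝒵) (p q : ℕ) (hp : p ≤ m) (hq : q ≤ m) (i₁ i₂ : 𝒵) :
    (if z ((p : ℕ) : Fin (m + 1)) = i₁ then (1 : ℤ) else 0)
        * (if z ((q : ℕ) : Fin (m + 1)) = i₂ then (1 : ℤ) else 0)
      = (if z 0 = i₁ then (1 : ℤ) else 0) * (if z 0 = i₂ then (1 : ℤ) else 0)
        + (if z 0 = i₂ then (1 : ℤ) else 0) * ∑ k : 𝒵, jumpCount m z k i₁ p
        + (if z 0 = i₁ then (1 : ℤ) else 0) * ∑ k : 𝒵, jumpCount m z k i₂ q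
        + ∑ k₁ : 𝒵, ∑ k₂ : 𝒵, jumpCount m z k₁ i₁ p * jumpCount m z k₂ i₂ q := by
  rw [univariate m z i₁ p, univariate m z i₂ q, ← Finset.sum_mul_sum]
  ring
end

section
/- Let (Ω, 𝒜, μ) be a probability space, let a₁ ≤ b₁ and a₂ ≤ b₂ be real numbers, and let X : ℕ → Ω → (ℝ × ℝ → ℝ) be a sequence of random fields that are independent and identically distributed (as random elements of ℝ×ℝ → ℝ with the product σ-algebra, each coordinate evaluation ω ↦ X n ω t being measurable). Assume that for every n and every ω, the path t ↦ X n ω t is nonnegative, monotone with respect to the componentwise partial order on ℝ², and has nonnegative rectangle increments; and assume ω ↦ X 0 ω (b₁,b₂) is μ-integrable. Define F(t) := ∫ X 0 ω t dμ(ω). Then for μ-almost every ω, sup_{t ∈ [a₁,b₁]×[a₂,b₂]} | (1/n) Σ_{m=0}^{n−1} X m ω t − F(t) | → 0 as n → ∞. -/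
open Filter Topology MeasureTheory ProbabilityTheory

/-- Left-limit along the sequence `x - 1/(r+1)`. -/
noncomputable def gcSupL (f : ℝ → ℝ) (x : ℝ) : ℝ := ⨆ r : ℕ, f (x - 1 / ((r : ℝ) + 1))

/-- Right-limit along the sequence `min (x + 1/(r+1)) b`. -/
noncomputable def gcInfR (f : ℝ → ℝ) (b x : ℝ) : ℝ := ⨅ r : ℕ, f (min (x + 1 / ((r : ℝ) + 1)) b)

section helpers

variable {f : ℝ → ℝ} {b : ℝ} (hf : ∀ x y, x ≤ y → y ≤ b → f x ≤ f y)
include hf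

lemma gc_bddAbove (x : ℝ) (hx : x ≤ b) :
    BddAbove (Set.range fun r : ℕ => f (x - 1 / ((r : ℝ) + 1))) := by
  refine ⟨f x, ?_⟩
  rintro _ ⟨r, rfl⟩
  exact hf _ _ (sub_le_self _ (by positivity)) hx

lemma gcSupL_le (x : ℝ) (hx : x ≤ b) : gcSupL f x ≤ f x :=
  ciSup_le fun r => hf _ _ (sub_le_self _ (by positivity)) hx

lemma le_gcSupL (t x : ℝ) (ht : t < x) (hx : x ≤ b) : f t ≤ gcSupL f x := by
  obtain ⟨r, hr⟩ := exists_nat_one_div_lt (sub_pos.2 ht)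
  have hpos : (0:ℝ) < 1 / ((r : ℝ) + 1) := by positivity
  exact le_ciSup_of_le (gc_bddAbove hf x hx) r (hf _ _ (by linarith) (by linarith))

lemma gc_bddBelow (x : ℝ) (hx : x ≤ b) :
    BddBelow (Set.range fun r : ℕ => f (min (x + 1 / ((r : ℝ) + 1)) b)) := by
  refine ⟨f x, ?_⟩
  rintro _ ⟨r, rfl⟩
  exact hf _ _ (le_min (le_add_of_nonneg_right (by positivity)) hx) (min_le_right _ _)

lemma le_gcInfR (x : ℝ) (hx : x ≤ b) : f x ≤ gcInfR f b x :=
  le_ciInf fun r => hf _ _ (le_min (le_add_of_nonneg_right (by positivity)) hx) (min_le_right _ _)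

lemma gcInfR_le_apply (x : ℝ) (hx : x ≤ b) (r : ℕ) :
    gcInfR f b x ≤ f (min (x + 1 / ((r : ℝ) + 1)) b) :=
  ciInf_le (gc_bddBelow hf x hx) r

lemma gcInfR_le (x t : ℝ) (hx : x ≤ b) (hxt : x < t) (htb : t ≤ b) : gcInfR f b x ≤ f t := by
  rcases eq_or_lt_of_le htb with rfl | hlt
  · exact ciInf_le_of_le (gc_bddBelow hf x hx) 0 (hf _ _ (min_le_right _ _) le_rfl)
  · obtain ⟨r, hr⟩ := exists_nat_one_div_lt (sub_pos.2 hxt)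
    exact ciInf_le_of_le (gc_bddBelow hf x hx) r (hf _ _ (min_le_of_left_le (by linarith)) htb)

/-- Grid construction: for a function monotone below `b`, there is a finite grid from `a` to `b`
whose consecutive left/right limits differ by at most `ε`. -/
lemma gc_grid (a : ℝ) (hab : a ≤ b) (ε : ℝ) (hε : 0 < ε) :
    ∃ K : ℕ, ∃ s : ℕ → ℝ, 0 < K ∧ s 0 = a ∧ s K = b ∧ Monotone s ∧
      (∀ i, a ≤ s i ∧ s i ≤ b) ∧
      ∀ i, gcSupL f (s (i + 1)) ≤ gcInfR f b (s i) + ε := by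
  classical
  set S : ℝ → Set ℝ := fun c => {t | c ≤ t ∧ t ≤ b ∧ gcSupL f t ≤ gcInfR f b c + ε} with hS
  have hSmem : ∀ c, c ≤ b → c ∈ S c := fun c hcb =>
    ⟨le_rfl, hcb, le_trans (gcSupL_le hf c hcb) (le_trans (le_gcInfR hf c hcb)
      (le_add_of_nonneg_right hε.le))⟩
  have hSbdd : ∀ c, BddAbove (S c) := fun c => ⟨b, fun t ht => ht.2.1⟩
  set step : ℝ → ℝ := fun c => sSup (S c) with hstepdef
  set s : ℕ → ℝ := fun i => step^[i] a with hsdef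
  have hs0 : s 0 = a := rfl
  have hssucc : ∀ i, s (i + 1) = step (s i) := fun i => Function.iterate_succ_apply' step i a
  have hstep : ∀ c, c ≤ b → (c ≤ step c ∧ step c ≤ b ∧ gcSupL f (step c) ≤ gcInfR f b c + ε ∧
      (step c < b → gcInfR f b c + ε ≤ gcInfR f b (step c))) := by
    intro c hcb
    have hne : (S c).Nonempty := ⟨c, hSmem c hcb⟩
    have h1 : c ≤ step c := le_csSup (hSbdd c) (hSmem c hcb)
    have h2 : step c ≤ b := csSup_le hne fun t ht => ht.2.1
    refine ⟨h1, h2, ?_, ?_⟩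
    · refine ciSup_le fun r => ?_
      have hd : step c - 1 / ((r : ℝ) + 1) < step c := sub_lt_self _ (by positivity)
      obtain ⟨t, htS, hdt⟩ := exists_lt_of_lt_csSup hne hd
      exact le_trans (le_gcSupL hf _ t hdt htS.2.1) htS.2.2
    · intro hlt
      refine le_ciInf fun r => ?_
      set u := min (step c + 1 / ((r : ℝ) + 1)) b with hu
      have hu1 : step c < u := lt_min (lt_add_of_pos_right _ (by positivity)) hlt
      have hu2 : u ≤ b := min_le_right _ _
      have hnot : u ∉ S c := fun hmem => absurd (le_csSup (hSbdd c) hmem) (not_le.2 hu1)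
      have h3 : ¬ gcSupL f u ≤ gcInfR f b c + ε := fun h => hnot ⟨le_trans h1 hu1.le, hu2, h⟩
      exact le_trans (not_le.1 h3).le (gcSupL_le hf u hu2)
  have hsb : ∀ i, s i ≤ b := by
    intro i
    induction i with
    | zero => exact hab
    | succ i ih => rw [hssucc]; exact (hstep (s i) ih).2.1
  have hsa : ∀ i, a ≤ s i := by
    intro i
    induction i with
    | zero => exact le_rfl
    | succ i ih => rw [hssucc]; exact le_trans ih (hstep (s i) (hsb i)).1
  have hsmono : Monotone s := monotone_nat_of_le_succ fun i => by
    rw [hssucc]; exact (hstep (s i) (hsb i)).1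
  have hmain : ∀ i, gcSupL f (s (i + 1)) ≤ gcInfR f b (s i) + ε := fun i => by
    rw [hssucc]; exact (hstep (s i) (hsb i)).2.2.1
  have hprog : ∀ i, s (i + 1) < b → gcInfR f b (s i) + ε ≤ gcInfR f b (s (i + 1)) := fun i h => by
    rw [hssucc] at h ⊢; exact (hstep (s i) (hsb i)).2.2.2 h
  refine ⟨⌈(f b - f a) / ε⌉₊ + 1, s, Nat.succ_pos _, rfl, ?_, hsmono, fun i => ⟨hsa i, hsb i⟩, hmain⟩
  set K := ⌈(f b - f a) / ε⌉₊ + 1 with hK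
  by_contra hne
  have hltb : s K < b := lt_of_le_of_ne (hsb K) hne
  have hall : ∀ i, i ≤ K → s i < b := fun i hi => lt_of_le_of_lt (hsmono hi) hltb
  have hind : ∀ i, i ≤ K → gcInfR f b a + i * ε ≤ gcInfR f b (s i) := by
    intro i
    induction i with
    | zero => intro _; simp [hs0]
    | succ i ih =>
      intro hi
      have h1 := ih (le_trans (Nat.le_succ i) hi)
      have h2 := hprog i (hall (i + 1) hi)
      push_cast
      nlinarith
  have h1 : gcInfR f b a + K * ε ≤ gcInfR f b (s K) := hind K le_rfl
  have h2 : gcInfR f b (s K) ≤ f b :=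
    ciInf_le_of_le (gc_bddBelow hf (s K) (hsb K)) 0 (hf _ _ (min_le_right _ _) le_rfl)
  have h3 : f a ≤ gcInfR f b a := le_gcInfR hf a hab
  have h4 : (K : ℝ) * ε ≤ f b - f a := by linarith
  have h5 : (f b - f a) / ε ≤ ⌈(f b - f a) / ε⌉₊ := Nat.le_ceil _
  have h6 : (K : ℝ) = ⌈(f b - f a) / ε⌉₊ + 1 := by rw [hK]; push_cast; ring
  have h7 : (K : ℝ) ≤ (f b - f a) / ε := (le_div_iff₀ hε).2 h4
  linarith

end helpers

lemma gc_locate (s : ℕ → ℝ) (K : ℕ) (hm : Monotone s) (t : ℝ) (h0 : s 0 ≤ t) (hK : t ≤ s K) :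
    (∃ i, i ≤ K ∧ s i = t) ∨ (∃ i, i + 1 ≤ K ∧ s i < t ∧ t < s (i + 1)) := by
  classical
  by_cases hex : ∃ i, i ≤ K ∧ s i = t
  · exact Or.inl hex
  right
  push_neg at hex
  have htK : t < s K := lt_of_le_of_ne hK fun h => hex K le_rfl h.symm
  have hP : ∃ j, t < s j := ⟨K, htK⟩
  have hj : t < s (Nat.find hP) := Nat.find_spec hP
  have hjK : Nat.find hP ≤ K := Nat.find_min' hP htK
  have hj0 : Nat.find hP ≠ 0 := by
    intro h
    rw [h] at hj
    exact absurd hj (not_lt.2 h0)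
  obtain ⟨i, hisucc⟩ := Nat.exists_eq_succ_of_ne_zero hj0
  rw [hisucc] at hj hjK
  have hi : ¬ t < s i := Nat.find_min hP (by omega)
  exact ⟨i, hjK, lt_of_le_of_ne (not_lt.1 hi) fun h => hex i (by omega) h, hj⟩

lemma gc_slln {Ω : Type*} [MeasurableSpace Ω] {μ : Measure Ω} [IsProbabilityMeasure μ]
    (X : ℕ → Ω → (ℝ × ℝ → ℝ)) (hX_meas : ∀ n, Measurable (X n))
    (hX_indep : iIndepFun X μ)
    (hX_ident : ∀ n, IdentDistrib (X n) (X 0) μ μ)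
    (T : (ℝ × ℝ → ℝ) → ℝ) (hT : Measurable T)
    (hint : Integrable (fun ω => T (X 0 ω)) μ) :
    ∀ᵐ ω ∂μ, Tendsto (fun n : ℕ => (n : ℝ)⁻¹ * ∑ m ∈ Finset.range n, T (X m ω)) atTop
      (𝓝 (∫ ω, T (X 0 ω) ∂μ)) := by
  have h := strong_law_ae_real (fun n ω => T (X n ω)) hint
    (fun i j hij => (hX_indep.indepFun hij).comp hT hT)
    (fun n => (hX_ident n).comp hT)
  filter_upwards [h] with ω hω
  simpa [div_eq_inv_mul] using hω


/-- Approach sequence from below-left towards `(v₁, v₂)` (in the flagged coordinates). -/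
noncomputable def gcGU (v₁ v₂ : ℝ) (c₁ c₂ : Bool) (r : ℕ) : ℝ × ℝ :=
  ((if c₁ then v₁ - 1 / ((r : ℝ) + 1) else v₁), (if c₂ then v₂ - 1 / ((r : ℝ) + 1) else v₂))

/-- Approach sequence from above-right towards `(u₁, u₂)`, capped at `(b₁, b₂)`. -/
noncomputable def gcGD (b₁ b₂ u₁ u₂ : ℝ) (c₁ c₂ : Bool) (r : ℕ) : ℝ × ℝ :=
  ((if c₁ then min (u₁ + 1 / ((r : ℝ) + 1)) b₁ else u₁),
   (if c₂ then min (u₂ + 1 / ((r : ℝ) + 1)) b₂ else u₂))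

/-- Left-limit functional on paths. -/
noncomputable def gcTU (v₁ v₂ : ℝ) (c₁ c₂ : Bool) (p : ℝ × ℝ → ℝ) : ℝ :=
  ⨆ r : ℕ, p (gcGU v₁ v₂ c₁ c₂ r)

/-- Right-limit functional on paths. -/
noncomputable def gcTD (b₁ b₂ u₁ u₂ : ℝ) (c₁ c₂ : Bool) (p : ℝ × ℝ → ℝ) : ℝ :=
  ⨅ r : ℕ, p (gcGD b₁ b₂ u₁ u₂ c₁ c₂ r)

lemma gcTU_def (v₁ v₂ : ℝ) (c₁ c₂ : Bool) (p : ℝ × ℝ → ℝ) :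
    gcTU v₁ v₂ c₁ c₂ p = ⨆ r : ℕ, p (gcGU v₁ v₂ c₁ c₂ r) := rfl

lemma gcTD_def (b₁ b₂ u₁ u₂ : ℝ) (c₁ c₂ : Bool) (p : ℝ × ℝ → ℝ) :
    gcTD b₁ b₂ u₁ u₂ c₁ c₂ p = ⨅ r : ℕ, p (gcGD b₁ b₂ u₁ u₂ c₁ c₂ r) := rfl

lemma gc_one_div_anti {r r' : ℕ} (h : r ≤ r') : 1 / ((r' : ℝ) + 1) ≤ 1 / ((r : ℝ) + 1) := by
  apply one_div_le_one_div_of_le (by positivity)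
  have : (r : ℝ) ≤ r' := Nat.cast_le.2 h
  linarith

lemma gcGU_mono (v₁ v₂ : ℝ) (c₁ c₂ : Bool) : Monotone (gcGU v₁ v₂ c₁ c₂) := by
  intro r r' h
  have h1 := gc_one_div_anti h
  refine Prod.mk_le_mk.2 ⟨?_, ?_⟩ <;> split_ifs <;> first | linarith | exact le_rfl

lemma gcGD_anti (b₁ b₂ u₁ u₂ : ℝ) (c₁ c₂ : Bool) : Antitone (gcGD b₁ b₂ u₁ u₂ c₁ c₂) := by
  intro r r' h
  have h1 := gc_one_div_anti h
  refine Prod.mk_le_mk.2 ⟨?_, ?_⟩ <;> split_ifs <;>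
    first | exact min_le_min (by linarith) le_rfl | exact le_rfl

lemma gcGU_le {v₁ v₂ b₁ b₂ : ℝ} (hv₁ : v₁ ≤ b₁) (hv₂ : v₂ ≤ b₂) (c₁ c₂ : Bool) (r : ℕ) :
    gcGU v₁ v₂ c₁ c₂ r ≤ (b₁, b₂) := by
  have h1 : (0 : ℝ) < 1 / ((r : ℝ) + 1) := by positivity
  refine Prod.mk_le_mk.2 ⟨?_, ?_⟩ <;> split_ifs <;> first | linarith | assumption

lemma gcGD_le {u₁ u₂ b₁ b₂ : ℝ} (hu₁ : u₁ ≤ b₁) (hu₂ : u₂ ≤ b₂) (c₁ c₂ : Bool) (r : ℕ) :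
    gcGD b₁ b₂ u₁ u₂ c₁ c₂ r ≤ (b₁, b₂) := by
  refine Prod.mk_le_mk.2 ⟨?_, ?_⟩ <;> split_ifs <;> first | exact min_le_right _ _ | assumption

lemma gcTU_meas (v₁ v₂ : ℝ) (c₁ c₂ : Bool) : Measurable (gcTU v₁ v₂ c₁ c₂) :=
  Measurable.iSup fun _ => measurable_pi_apply _

lemma gcTD_meas (b₁ b₂ u₁ u₂ : ℝ) (c₁ c₂ : Bool) : Measurable (gcTD b₁ b₂ u₁ u₂ c₁ c₂) :=
  Measurable.iInf fun _ => measurable_pi_apply _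

/-- Almost-sure uniform law of large numbers for i.i.d. monotone random fields on `ℝ × ℝ`
(bivariate Glivenko–Cantelli theorem): if the paths are nonnegative, monotone for the
componentwise order, have nonnegative rectangle increments, and the value at the upper corner
is integrable, then the empirical means converge uniformly on the rectangle to the mean
function, almost surely. -/
theorem bivariate_glivenko_cantelli
    {Ω : Type*} [MeasurableSpace Ω] (μ : Measure Ω) [IsProbabilityMeasure μ]
    (a₁ b₁ a₂ b₂ : ℝ) (h₁ : a₁ ≤ b₁) (h₂ : a₂ ≤ b₂)
    (X : ℕ → Ω → (ℝ × ℝ → ℝ))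
    (hX_meas : ∀ n, Measurable (X n))
    (hX_indep : iIndepFun X μ)
    (hX_ident : ∀ n, IdentDistrib (X n) (X 0) μ μ)
    (hX_nonneg : ∀ n, ∀ ω, ∀ t : ℝ × ℝ, 0 ≤ X n ω t)
    (hX_mono : ∀ n, ∀ ω, Monotone (X n ω))
    (hX_rect : ∀ n, ∀ ω, ∀ x₁ y₁ x₂ y₂ : ℝ, x₁ ≤ y₁ → x₂ ≤ y₂ →
      0 ≤ X n ω (y₁, y₂) - X n ω (x₁, y₂) - X n ω (y₁, x₂) + X n ω (x₁, x₂))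
    (hX_int : Integrable (fun ω => X 0 ω (b₁, b₂)) μ)
    (F : ℝ × ℝ → ℝ) (hF : ∀ t : ℝ × ℝ, F t = ∫ ω, X 0 ω t ∂μ) :
    ∀ᵐ ω ∂μ,
      Tendsto (fun n : ℕ => ⨆ t : (Set.Icc a₁ b₁ ×ˢ Set.Icc a₂ b₂ : Set (ℝ × ℝ)),
        |(n : ℝ)⁻¹ * ∑ m ∈ Finset.range n, X m ω t - F t|) atTop (𝓝 0) := by
  classical
  -- measurability and integrability of point evaluations
  have hmeas_pt : ∀ (n : ℕ) (u : ℝ × ℝ), Measurable fun ω => X n ω u :=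
    fun n u => (measurable_pi_apply u).comp (hX_meas n)
  have hint_pt : ∀ u : ℝ × ℝ, u.1 ≤ b₁ → u.2 ≤ b₂ → Integrable (fun ω => X 0 ω u) μ := by
    intro u hu1 hu2
    refine hX_int.mono' (hmeas_pt 0 u).aestronglyMeasurable ?_
    filter_upwards with ω
    rw [Real.norm_eq_abs, abs_of_nonneg (hX_nonneg 0 ω u)]
    exact hX_mono 0 ω (Prod.le_def.2 ⟨hu1, hu2⟩)
  have hFnonneg : ∀ u : ℝ × ℝ, 0 ≤ F u := fun u => by
    rw [hF]; exact integral_nonneg fun ω => hX_nonneg 0 ω u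
  have hFmono : ∀ u v : ℝ × ℝ, u ≤ v → v.1 ≤ b₁ → v.2 ≤ b₂ → F u ≤ F v := by
    intro u v huv hb1 hb2
    rw [hF, hF]
    exact integral_mono
      (hint_pt u (le_trans (Prod.le_def.1 huv).1 hb1) (le_trans (Prod.le_def.1 huv).2 hb2))
      (hint_pt v hb1 hb2) fun ω => hX_mono 0 ω huv
  have hFrect : ∀ x₁ y₁ x₂ y₂ : ℝ, x₁ ≤ y₁ → x₂ ≤ y₂ → y₁ ≤ b₁ → y₂ ≤ b₂ →
      0 ≤ F (y₁, y₂) - F (x₁, y₂) - F (y₁, x₂) + F (x₁, x₂) := by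
    intro x₁ y₁ x₂ y₂ hx hy hb1 hb2
    have i1 := hint_pt (y₁, y₂) hb1 hb2
    have i2 := hint_pt (x₁, y₂) (le_trans hx hb1) hb2
    have i3 := hint_pt (y₁, x₂) hb1 (le_trans hy hb2)
    have i4 := hint_pt (x₁, x₂) (le_trans hx hb1) (le_trans hy hb2)
    have i12 : Integrable (fun ω => X 0 ω (y₁, y₂) - X 0 ω (x₁, y₂)) μ := i1.sub i2
    have i123 : Integrable (fun ω => X 0 ω (y₁, y₂) - X 0 ω (x₁, y₂) - X 0 ω (y₁, x₂)) μ :=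
      i12.sub i3
    have h0 : 0 ≤ ∫ ω, (X 0 ω (y₁, y₂) - X 0 ω (x₁, y₂) - X 0 ω (y₁, x₂) + X 0 ω (x₁, x₂)) ∂μ :=
      integral_nonneg fun ω => hX_rect 0 ω x₁ y₁ x₂ y₂ hx hy
    simp only [hF]
    rw [← integral_sub i1 i2, ← integral_sub i12 i3, ← integral_add i123 i4]
    exact h0
  -- marginals
  set F1 : ℝ → ℝ := fun x => F (x, b₂) with hF1def
  set F2 : ℝ → ℝ := fun y => F (b₁, y) with hF2def
  have hF1mono : ∀ x y, x ≤ y → y ≤ b₁ → F1 x ≤ F1 y := fun x y hxy hyb =>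
    hFmono (x, b₂) (y, b₂) (Prod.mk_le_mk.2 ⟨hxy, le_rfl⟩) hyb le_rfl
  have hF2mono : ∀ x y, x ≤ y → y ≤ b₂ → F2 x ≤ F2 y := fun x y hxy hyb =>
    hFmono (b₁, x) (b₁, y) (Prod.mk_le_mk.2 ⟨le_rfl, hxy⟩) le_rfl hyb
  have hkey : ∀ w₁ w₂ z₁ z₂ : ℝ, w₁ ≤ z₁ → w₂ ≤ z₂ → z₁ ≤ b₁ → z₂ ≤ b₂ →
      F (z₁, z₂) - F (w₁, w₂) ≤ (F1 z₁ - F1 w₁) + (F2 z₂ - F2 w₂) := by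
    intro w₁ w₂ z₁ z₂ hw1 hw2 hz1 hz2
    have hA := hFrect w₁ z₁ z₂ b₂ hw1 hz2 hz1 le_rfl
    have hB := hFrect w₁ b₁ w₂ z₂ (le_trans hw1 hz1) hw2 le_rfl hz2
    simp only [hF1def, hF2def]
    linarith
  -- grids
  have hgrid1 : ∀ k : ℕ, ∃ K : ℕ, ∃ s : ℕ → ℝ, 0 < K ∧ s 0 = a₁ ∧ s K = b₁ ∧ Monotone s ∧
      (∀ i, a₁ ≤ s i ∧ s i ≤ b₁) ∧
      ∀ i, gcSupL F1 (s (i + 1)) ≤ gcInfR F1 b₁ (s i) + 1 / ((k : ℝ) + 1) := fun k =>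
    gc_grid hF1mono a₁ h₁ (1 / ((k : ℝ) + 1)) (by positivity)
  have hgrid2 : ∀ k : ℕ, ∃ K : ℕ, ∃ s : ℕ → ℝ, 0 < K ∧ s 0 = a₂ ∧ s K = b₂ ∧ Monotone s ∧
      (∀ i, a₂ ≤ s i ∧ s i ≤ b₂) ∧
      ∀ i, gcSupL F2 (s (i + 1)) ≤ gcInfR F2 b₂ (s i) + 1 / ((k : ℝ) + 1) := fun k =>
    gc_grid hF2mono a₂ h₂ (1 / ((k : ℝ) + 1)) (by positivity)
  choose K₁ s₁ hK₁ hs₁0 hs₁K hs₁m hs₁ab hs₁main using hgrid1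
  choose K₂ s₂ hK₂ hs₂0 hs₂K hs₂m hs₂ab hs₂main using hgrid2
  -- bounds for the limit functionals along monotone nonnegative paths
  have hbddU : ∀ (n : ℕ) (ω : Ω) (v₁ v₂ : ℝ) (c₁ c₂ : Bool), v₁ ≤ b₁ → v₂ ≤ b₂ →
      BddAbove (Set.range fun r : ℕ => X n ω (gcGU v₁ v₂ c₁ c₂ r)) := by
    intro n ω v₁ v₂ c₁ c₂ hv1 hv2
    refine ⟨X n ω (b₁, b₂), ?_⟩
    rintro _ ⟨r, rfl⟩
    exact hX_mono n ω (gcGU_le hv1 hv2 c₁ c₂ r)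
  have hbddD : ∀ (n : ℕ) (ω : Ω) (u₁ u₂ : ℝ) (c₁ c₂ : Bool),
      BddBelow (Set.range fun r : ℕ => X n ω (gcGD b₁ b₂ u₁ u₂ c₁ c₂ r)) := by
    intro n ω u₁ u₂ c₁ c₂
    exact ⟨0, by rintro _ ⟨r, rfl⟩; exact hX_nonneg n ω _⟩
  have hTU_le : ∀ (n : ℕ) (ω : Ω) (v₁ v₂ : ℝ) (c₁ c₂ : Bool), v₁ ≤ b₁ → v₂ ≤ b₂ →
      gcTU v₁ v₂ c₁ c₂ (X n ω) ≤ X n ω (b₁, b₂) := by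
    intro n ω v₁ v₂ c₁ c₂ hv1 hv2
    exact ciSup_le fun r => hX_mono n ω (gcGU_le hv1 hv2 c₁ c₂ r)
  have hTU_nonneg : ∀ (n : ℕ) (ω : Ω) (v₁ v₂ : ℝ) (c₁ c₂ : Bool), v₁ ≤ b₁ → v₂ ≤ b₂ →
      0 ≤ gcTU v₁ v₂ c₁ c₂ (X n ω) := by
    intro n ω v₁ v₂ c₁ c₂ hv1 hv2
    exact le_ciSup_of_le (hbddU n ω v₁ v₂ c₁ c₂ hv1 hv2) 0 (hX_nonneg n ω _)
  have hTD_le : ∀ (n : ℕ) (ω : Ω) (u₁ u₂ : ℝ) (c₁ c₂ : Bool), u₁ ≤ b₁ → u₂ ≤ b₂ →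
      gcTD b₁ b₂ u₁ u₂ c₁ c₂ (X n ω) ≤ X n ω (b₁, b₂) := by
    intro n ω u₁ u₂ c₁ c₂ hu1 hu2
    exact ciInf_le_of_le (hbddD n ω u₁ u₂ c₁ c₂) 0 (hX_mono n ω (gcGD_le hu1 hu2 c₁ c₂ 0))
  have hTD_nonneg : ∀ (n : ℕ) (ω : Ω) (u₁ u₂ : ℝ) (c₁ c₂ : Bool),
      0 ≤ gcTD b₁ b₂ u₁ u₂ c₁ c₂ (X n ω) :=
    fun n ω u₁ u₂ c₁ c₂ => le_ciInf fun r => hX_nonneg n ω _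
  have hTUint : ∀ (v₁ v₂ : ℝ) (c₁ c₂ : Bool), v₁ ≤ b₁ → v₂ ≤ b₂ →
      Integrable (fun ω => gcTU v₁ v₂ c₁ c₂ (X 0 ω)) μ := by
    intro v₁ v₂ c₁ c₂ hv1 hv2
    refine hX_int.mono' ((gcTU_meas v₁ v₂ c₁ c₂).comp (hX_meas 0)).aestronglyMeasurable ?_
    filter_upwards with ω
    rw [Real.norm_eq_abs, abs_of_nonneg (hTU_nonneg 0 ω v₁ v₂ c₁ c₂ hv1 hv2)]
    exact hTU_le 0 ω v₁ v₂ c₁ c₂ hv1 hv2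
  have hTDint : ∀ (u₁ u₂ : ℝ) (c₁ c₂ : Bool), u₁ ≤ b₁ → u₂ ≤ b₂ →
      Integrable (fun ω => gcTD b₁ b₂ u₁ u₂ c₁ c₂ (X 0 ω)) μ := by
    intro u₁ u₂ c₁ c₂ hu1 hu2
    refine hX_int.mono' ((gcTD_meas b₁ b₂ u₁ u₂ c₁ c₂).comp (hX_meas 0)).aestronglyMeasurable ?_
    filter_upwards with ω
    rw [Real.norm_eq_abs, abs_of_nonneg (hTD_nonneg 0 ω u₁ u₂ c₁ c₂)]
    exact hTD_le 0 ω u₁ u₂ c₁ c₂ hu1 hu2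
  -- the almost-sure good event: SLLN for all countably many limit functionals
  have hgood : ∀ᵐ ω ∂μ, ∀ (k i j : ℕ) (c₁ c₂ : Bool),
      Tendsto (fun n : ℕ => (n : ℝ)⁻¹ *
          ∑ m ∈ Finset.range n, gcTU (s₁ k i) (s₂ k j) c₁ c₂ (X m ω)) atTop
        (𝓝 (∫ ω', gcTU (s₁ k i) (s₂ k j) c₁ c₂ (X 0 ω') ∂μ)) ∧
      Tendsto (fun n : ℕ => (n : ℝ)⁻¹ *
          ∑ m ∈ Finset.range n, gcTD b₁ b₂ (s₁ k i) (s₂ k j) c₁ c₂ (X m ω)) atTop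
        (𝓝 (∫ ω', gcTD b₁ b₂ (s₁ k i) (s₂ k j) c₁ c₂ (X 0 ω') ∂μ)) := by
    rw [ae_all_iff]; intro k
    rw [ae_all_iff]; intro i
    rw [ae_all_iff]; intro j
    rw [ae_all_iff]; intro c₁
    rw [ae_all_iff]; intro c₂
    have hb1 := (hs₁ab k i).2
    have hb2 := (hs₂ab k j).2
    exact (gc_slln X hX_meas hX_indep hX_ident _ (gcTU_meas _ _ _ _)
        (hTUint _ _ _ _ hb1 hb2)).and
      (gc_slln X hX_meas hX_indep hX_ident _ (gcTD_meas _ _ _ _ _ _)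
        (hTDint _ _ _ _ hb1 hb2))
  filter_upwards [hgood] with ω hω
  -- now a purely deterministic argument for this fixed ω
  have hmem_ab : (a₁, a₂) ∈ (Set.Icc a₁ b₁ ×ˢ Set.Icc a₂ b₂ : Set (ℝ × ℝ)) :=
    Set.mem_prod.2 ⟨Set.mem_Icc.2 ⟨le_rfl, h₁⟩, Set.mem_Icc.2 ⟨le_rfl, h₂⟩⟩
  haveI hnonempty : Nonempty ↥(Set.Icc a₁ b₁ ×ˢ Set.Icc a₂ b₂ : Set (ℝ × ℝ)) := ⟨⟨_, hmem_ab⟩⟩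
  have hbddG : ∀ n : ℕ, BddAbove (Set.range
      fun t : (Set.Icc a₁ b₁ ×ˢ Set.Icc a₂ b₂ : Set (ℝ × ℝ)) =>
        |(n : ℝ)⁻¹ * ∑ m ∈ Finset.range n, X m ω t - F t|) := by
    intro n
    refine ⟨(n : ℝ)⁻¹ * ∑ m ∈ Finset.range n, X m ω (b₁, b₂) + F (b₁, b₂), ?_⟩
    rintro _ ⟨⟨t, ht⟩, rfl⟩
    obtain ⟨ht1, ht2⟩ := Set.mem_prod.1 ht
    have h1 : (0 : ℝ) ≤ (n : ℝ)⁻¹ * ∑ m ∈ Finset.range n, X m ω t :=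
      mul_nonneg (by positivity) (Finset.sum_nonneg fun m _ => hX_nonneg m ω t)
    have h2 : (n : ℝ)⁻¹ * ∑ m ∈ Finset.range n, X m ω t ≤
        (n : ℝ)⁻¹ * ∑ m ∈ Finset.range n, X m ω (b₁, b₂) :=
      mul_le_mul_of_nonneg_left (Finset.sum_le_sum fun m _ => hX_mono m ω
        (Prod.le_def.2 ⟨(Set.mem_Icc.1 ht1).2, (Set.mem_Icc.1 ht2).2⟩)) (by positivity)
    have h3 : 0 ≤ F t := hFnonneg t
    have h4 : F t ≤ F (b₁, b₂) := hFmono t (b₁, b₂)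
      (Prod.le_def.2 ⟨(Set.mem_Icc.1 ht1).2, (Set.mem_Icc.1 ht2).2⟩) le_rfl le_rfl
    exact abs_le.2 ⟨by linarith, by linarith⟩
  have hG0 : ∀ n : ℕ, 0 ≤ ⨆ t : (Set.Icc a₁ b₁ ×ˢ Set.Icc a₂ b₂ : Set (ℝ × ℝ)),
      |(n : ℝ)⁻¹ * ∑ m ∈ Finset.range n, X m ω t - F t| := fun n =>
    le_ciSup_of_le (hbddG n) ⟨(a₁, a₂), hmem_ab⟩ (abs_nonneg _)
  -- main eventual bound for each k
  have hev : ∀ k : ℕ, ∀ᶠ n : ℕ in atTop,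
      (⨆ t : (Set.Icc a₁ b₁ ×ˢ Set.Icc a₂ b₂ : Set (ℝ × ℝ)),
        |(n : ℝ)⁻¹ * ∑ m ∈ Finset.range n, X m ω t - F t|) ≤ 3 / ((k : ℝ) + 1) := by
    intro k
    set ε : ℝ := 1 / ((k : ℝ) + 1) with hεdef
    have hε : 0 < ε := by positivity
    have hdev : ∀ᶠ n : ℕ in atTop, ∀ i ∈ Finset.range (K₁ k + 1), ∀ j ∈ Finset.range (K₂ k + 1),
        ∀ c₁ c₂ : Bool,
        |(n : ℝ)⁻¹ * ∑ m ∈ Finset.range n, gcTU (s₁ k i) (s₂ k j) c₁ c₂ (X m ω) -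
          ∫ ω', gcTU (s₁ k i) (s₂ k j) c₁ c₂ (X 0 ω') ∂μ| ≤ ε ∧
        |(n : ℝ)⁻¹ * ∑ m ∈ Finset.range n, gcTD b₁ b₂ (s₁ k i) (s₂ k j) c₁ c₂ (X m ω) -
          ∫ ω', gcTD b₁ b₂ (s₁ k i) (s₂ k j) c₁ c₂ (X 0 ω') ∂μ| ≤ ε := by
      rw [Filter.eventually_all_finset]; intro i _
      rw [Filter.eventually_all_finset]; intro j _
      rw [Filter.eventually_all]; intro c₁
      rw [Filter.eventually_all]; intro c₂
      have mk : ∀ {f : ℕ → ℝ} {L : ℝ}, Tendsto f atTop (𝓝 L) →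
          ∀ᶠ n : ℕ in atTop, |f n - L| ≤ ε := by
        intro f L h
        obtain ⟨N, hN⟩ := Metric.tendsto_atTop.1 h ε hε
        refine Filter.eventually_atTop.2 ⟨N, fun n hn => ?_⟩
        have := hN n hn
        rw [Real.dist_eq] at this
        exact this.le
      filter_upwards [mk (hω k i j c₁ c₂).1, mk (hω k i j c₁ c₂).2] with n hn1 hn2
      exact ⟨hn1, hn2⟩
    filter_upwards [hdev] with n hdevn
    refine ciSup_le ?_
    rintro ⟨t, ht⟩
    obtain ⟨ht1, ht2⟩ := Set.mem_prod.1 ht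
    obtain ⟨hta1, htb1⟩ := Set.mem_Icc.1 ht1
    obtain ⟨hta2, htb2⟩ := Set.mem_Icc.1 ht2
    -- bracket t in the two grids
    have hc1 : ∃ iD iU : ℕ, ∃ c : Bool, iD ≤ K₁ k ∧ iU ≤ K₁ k ∧
        (c = true → s₁ k iD < t.1 ∧ t.1 < s₁ k iU ∧
          gcSupL F1 (s₁ k iU) ≤ gcInfR F1 b₁ (s₁ k iD) + ε) ∧
        (c = false → s₁ k iD = t.1 ∧ s₁ k iU = t.1) := by
      rcases gc_locate (s₁ k) (K₁ k) (hs₁m k) t.1 (by rw [hs₁0]; exact hta1)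
          (by rw [hs₁K]; exact htb1) with ⟨i, hiK, hieq⟩ | ⟨i, hiK, hl, hr⟩
      · exact ⟨i, i, false, hiK, hiK, by simp, fun _ => ⟨hieq, hieq⟩⟩
      · exact ⟨i, i + 1, true, by omega, hiK, fun _ => ⟨hl, hr, hs₁main k i⟩, by simp⟩
    have hc2 : ∃ jD jU : ℕ, ∃ c : Bool, jD ≤ K₂ k ∧ jU ≤ K₂ k ∧
        (c = true → s₂ k jD < t.2 ∧ t.2 < s₂ k jU ∧
          gcSupL F2 (s₂ k jU) ≤ gcInfR F2 b₂ (s₂ k jD) + ε) ∧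
        (c = false → s₂ k jD = t.2 ∧ s₂ k jU = t.2) := by
      rcases gc_locate (s₂ k) (K₂ k) (hs₂m k) t.2 (by rw [hs₂0]; exact hta2)
          (by rw [hs₂K]; exact htb2) with ⟨j, hjK, hjeq⟩ | ⟨j, hjK, hl, hr⟩
      · exact ⟨j, j, false, hjK, hjK, by simp, fun _ => ⟨hjeq, hjeq⟩⟩
      · exact ⟨j, j + 1, true, by omega, hjK, fun _ => ⟨hl, hr, hs₂main k j⟩, by simp⟩
    obtain ⟨iD, iU, c₁, hiD, hiU, hc₁t, hc₁f⟩ := hc1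
    obtain ⟨jD, jU, c₂, hjD, hjU, hc₂t, hc₂f⟩ := hc2
    have hvb1 : s₁ k iU ≤ b₁ := (hs₁ab k iU).2
    have hvb2 : s₂ k jU ≤ b₂ := (hs₂ab k jU).2
    have hub1 : s₁ k iD ≤ b₁ := (hs₁ab k iD).2
    have hub2 : s₂ k jD ≤ b₂ := (hs₂ab k jD).2
    -- mean-side coordinate estimates (upper)
    have hβ₁ : ∀ r : ℕ, F1 (max t.1 (gcGU (s₁ k iU) (s₂ k jU) c₁ c₂ r).1) ≤ F1 t.1 + ε := by
      intro r
      cases c₁ with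
      | false =>
        have he := (hc₁f rfl).2
        simp only [gcGU, Bool.false_eq_true, if_false, he, max_self]
        linarith
      | true =>
        obtain ⟨hl, hr, hctrl⟩ := hc₁t rfl
        simp only [gcGU, if_true]
        rcases le_total (s₁ k iU - 1 / ((r : ℝ) + 1)) t.1 with h | h
        · rw [max_eq_left h]; linarith
        · rw [max_eq_right h]
          have g1 : F1 (s₁ k iU - 1 / ((r : ℝ) + 1)) ≤ gcSupL F1 (s₁ k iU) :=
            le_ciSup (gc_bddAbove hF1mono _ hvb1) r
          have g2 : gcInfR F1 b₁ (s₁ k iD) ≤ F1 t.1 := gcInfR_le hF1mono _ _ hub1 hl htb1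
          linarith
    have hβ₂ : ∀ r : ℕ, F2 (max t.2 (gcGU (s₁ k iU) (s₂ k jU) c₁ c₂ r).2) ≤ F2 t.2 + ε := by
      intro r
      cases c₂ with
      | false =>
        have he := (hc₂f rfl).2
        simp only [gcGU, Bool.false_eq_true, if_false, he, max_self]
        linarith
      | true =>
        obtain ⟨hl, hr, hctrl⟩ := hc₂t rfl
        simp only [gcGU, if_true]
        rcases le_total (s₂ k jU - 1 / ((r : ℝ) + 1)) t.2 with h | h
        · rw [max_eq_left h]; linarith
        · rw [max_eq_right h]
          have g1 : F2 (s₂ k jU - 1 / ((r : ℝ) + 1)) ≤ gcSupL F2 (s₂ k jU) :=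
            le_ciSup (gc_bddAbove hF2mono _ hvb2) r
          have g2 : gcInfR F2 b₂ (s₂ k jD) ≤ F2 t.2 := gcInfR_le hF2mono _ _ hub2 hl htb2
          linarith
    -- mean-side coordinate estimates (lower)
    have hγ₁ : ∀ r : ℕ, F1 t.1 ≤ F1 (min t.1 (gcGD b₁ b₂ (s₁ k iD) (s₂ k jD) c₁ c₂ r).1) + ε := by
      intro r
      cases c₁ with
      | false =>
        have he := (hc₁f rfl).1
        simp only [gcGD, Bool.false_eq_true, if_false, he, min_self]
        linarith
      | true =>
        obtain ⟨hl, hr, hctrl⟩ := hc₁t rfl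
        simp only [gcGD, if_true]
        rcases le_total t.1 (min (s₁ k iD + 1 / ((r : ℝ) + 1)) b₁) with h | h
        · rw [min_eq_left h]; linarith
        · rw [min_eq_right h]
          have g1 : gcInfR F1 b₁ (s₁ k iD) ≤ F1 (min (s₁ k iD + 1 / ((r : ℝ) + 1)) b₁) :=
            gcInfR_le_apply hF1mono _ hub1 r
          have g2 : F1 t.1 ≤ gcSupL F1 (s₁ k iU) := le_gcSupL hF1mono t.1 _ hr hvb1
          linarith
    have hγ₂ : ∀ r : ℕ, F2 t.2 ≤ F2 (min t.2 (gcGD b₁ b₂ (s₁ k iD) (s₂ k jD) c₁ c₂ r).2) + ε := by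
      intro r
      cases c₂ with
      | false =>
        have he := (hc₂f rfl).1
        simp only [gcGD, Bool.false_eq_true, if_false, he, min_self]
        linarith
      | true =>
        obtain ⟨hl, hr, hctrl⟩ := hc₂t rfl
        simp only [gcGD, if_true]
        rcases le_total t.2 (min (s₂ k jD + 1 / ((r : ℝ) + 1)) b₂) with h | h
        · rw [min_eq_left h]; linarith
        · rw [min_eq_right h]
          have g1 : gcInfR F2 b₂ (s₂ k jD) ≤ F2 (min (s₂ k jD + 1 / ((r : ℝ) + 1)) b₂) :=
            gcInfR_le_apply hF2mono _ hub2 r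
          have g2 : F2 t.2 ≤ gcSupL F2 (s₂ k jU) := le_gcSupL hF2mono t.2 _ hr hvb2
          linarith
    -- empirical-side coordinate estimates
    have hδ₁ : ∃ r₀ : ℕ, ∀ r, r₀ ≤ r → t.1 ≤ (gcGU (s₁ k iU) (s₂ k jU) c₁ c₂ r).1 := by
      cases c₁ with
      | false =>
        exact ⟨0, fun r _ => by
          simp only [gcGU, Bool.false_eq_true, if_false]
          exact le_of_eq (hc₁f rfl).2.symm⟩
      | true =>
        obtain ⟨hl, hr, _⟩ := hc₁t rfl
        obtain ⟨r₀, hr₀⟩ := exists_nat_one_div_lt (sub_pos.2 hr)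
        refine ⟨r₀, fun r hrr => ?_⟩
        simp only [gcGU, if_true]
        have := gc_one_div_anti hrr
        linarith
    have hδ₂ : ∃ r₀ : ℕ, ∀ r, r₀ ≤ r → t.2 ≤ (gcGU (s₁ k iU) (s₂ k jU) c₁ c₂ r).2 := by
      cases c₂ with
      | false =>
        exact ⟨0, fun r _ => by
          simp only [gcGU, Bool.false_eq_true, if_false]
          exact le_of_eq (hc₂f rfl).2.symm⟩
      | true =>
        obtain ⟨hl, hr, _⟩ := hc₂t rfl
        obtain ⟨r₀, hr₀⟩ := exists_nat_one_div_lt (sub_pos.2 hr)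
        refine ⟨r₀, fun r hrr => ?_⟩
        simp only [gcGU, if_true]
        have := gc_one_div_anti hrr
        linarith
    have hδ'₁ : ∃ r₀ : ℕ, ∀ r, r₀ ≤ r → (gcGD b₁ b₂ (s₁ k iD) (s₂ k jD) c₁ c₂ r).1 ≤ t.1 := by
      cases c₁ with
      | false =>
        exact ⟨0, fun r _ => by
          simp only [gcGD, Bool.false_eq_true, if_false]
          exact le_of_eq (hc₁f rfl).1⟩
      | true =>
        obtain ⟨hl, _, _⟩ := hc₁t rfl
        rcases eq_or_lt_of_le htb1 with heq | hlt
        · exact ⟨0, fun r _ => by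
            simp only [gcGD, if_true]
            exact (min_le_right _ _).trans (le_of_eq heq.symm)⟩
        · obtain ⟨r₀, hr₀⟩ := exists_nat_one_div_lt (sub_pos.2 hl)
          refine ⟨r₀, fun r hrr => ?_⟩
          simp only [gcGD, if_true]
          have := gc_one_div_anti hrr
          exact min_le_of_left_le (by linarith)
    have hδ'₂ : ∃ r₀ : ℕ, ∀ r, r₀ ≤ r → (gcGD b₁ b₂ (s₁ k iD) (s₂ k jD) c₁ c₂ r).2 ≤ t.2 := by
      cases c₂ with
      | false =>
        exact ⟨0, fun r _ => by
          simp only [gcGD, Bool.false_eq_true, if_false]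
          exact le_of_eq (hc₂f rfl).1⟩
      | true =>
        obtain ⟨hl, _, _⟩ := hc₂t rfl
        rcases eq_or_lt_of_le htb2 with heq | hlt
        · exact ⟨0, fun r _ => by
            simp only [gcGD, if_true]
            exact (min_le_right _ _).trans (le_of_eq heq.symm)⟩
        · obtain ⟨r₀, hr₀⟩ := exists_nat_one_div_lt (sub_pos.2 hl)
          refine ⟨r₀, fun r hrr => ?_⟩
          simp only [gcGD, if_true]
          have := gc_one_div_anti hrr
          exact min_le_of_left_le (by linarith)
    -- mean bound, upper functional
    have hMU : (∫ ω', gcTU (s₁ k iU) (s₂ k jU) c₁ c₂ (X 0 ω') ∂μ) ≤ F (t.1, t.2) + (ε + ε) := by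
      have hint_r : ∀ r : ℕ, Integrable (fun ω' => X 0 ω' (gcGU (s₁ k iU) (s₂ k jU) c₁ c₂ r)) μ :=
        fun r => hint_pt _ (Prod.le_def.1 (gcGU_le hvb1 hvb2 c₁ c₂ r)).1
          (Prod.le_def.1 (gcGU_le hvb1 hvb2 c₁ c₂ r)).2
      have hmono_r : ∀ ω' : Ω, Monotone fun r : ℕ => X 0 ω' (gcGU (s₁ k iU) (s₂ k jU) c₁ c₂ r) :=
        fun ω' r r' hrr' => hX_mono 0 ω' (gcGU_mono _ _ _ _ hrr')
      have htend : ∀ ω' : Ω, Tendsto (fun r : ℕ => X 0 ω' (gcGU (s₁ k iU) (s₂ k jU) c₁ c₂ r))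
          atTop (𝓝 (gcTU (s₁ k iU) (s₂ k jU) c₁ c₂ (X 0 ω'))) := fun ω' => by
        rw [gcTU_def]
        exact tendsto_atTop_ciSup (hmono_r ω') (hbddU 0 ω' _ _ c₁ c₂ hvb1 hvb2)
      have hlim := integral_tendsto_of_tendsto_of_monotone hint_r
        (hTUint _ _ c₁ c₂ hvb1 hvb2) (ae_of_all _ hmono_r) (ae_of_all _ htend)
      refine le_of_tendsto hlim (Filter.Eventually.of_forall fun r => ?_)
      rw [← hF (gcGU (s₁ k iU) (s₂ k jU) c₁ c₂ r)]
      have hz1 : max t.1 (gcGU (s₁ k iU) (s₂ k jU) c₁ c₂ r).1 ≤ b₁ :=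
        max_le htb1 (Prod.le_def.1 (gcGU_le hvb1 hvb2 c₁ c₂ r)).1
      have hz2 : max t.2 (gcGU (s₁ k iU) (s₂ k jU) c₁ c₂ r).2 ≤ b₂ :=
        max_le htb2 (Prod.le_def.1 (gcGU_le hvb1 hvb2 c₁ c₂ r)).2
      have hm1 : F (gcGU (s₁ k iU) (s₂ k jU) c₁ c₂ r) ≤
          F (max t.1 (gcGU (s₁ k iU) (s₂ k jU) c₁ c₂ r).1,
            max t.2 (gcGU (s₁ k iU) (s₂ k jU) c₁ c₂ r).2) :=
        hFmono _ _ (Prod.le_def.2 ⟨le_max_right _ _, le_max_right _ _⟩) hz1 hz2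
      have hm2 := hkey t.1 t.2 (max t.1 (gcGU (s₁ k iU) (s₂ k jU) c₁ c₂ r).1)
        (max t.2 (gcGU (s₁ k iU) (s₂ k jU) c₁ c₂ r).2) (le_max_left _ _) (le_max_left _ _) hz1 hz2
      have hm3 := hβ₁ r
      have hm4 := hβ₂ r
      linarith
    -- mean bound, lower functional
    have hMD : F (t.1, t.2) - (ε + ε) ≤
        ∫ ω', gcTD b₁ b₂ (s₁ k iD) (s₂ k jD) c₁ c₂ (X 0 ω') ∂μ := by
      have hint_r : ∀ r : ℕ,
          Integrable (fun ω' => X 0 ω' (gcGD b₁ b₂ (s₁ k iD) (s₂ k jD) c₁ c₂ r)) μ :=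
        fun r => hint_pt _ (Prod.le_def.1 (gcGD_le hub1 hub2 c₁ c₂ r)).1
          (Prod.le_def.1 (gcGD_le hub1 hub2 c₁ c₂ r)).2
      have hanti_r : ∀ ω' : Ω,
          Antitone fun r : ℕ => X 0 ω' (gcGD b₁ b₂ (s₁ k iD) (s₂ k jD) c₁ c₂ r) :=
        fun ω' r r' hrr' => hX_mono 0 ω' (gcGD_anti _ _ _ _ _ _ hrr')
      have htend : ∀ ω' : Ω,
          Tendsto (fun r : ℕ => X 0 ω' (gcGD b₁ b₂ (s₁ k iD) (s₂ k jD) c₁ c₂ r))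
          atTop (𝓝 (gcTD b₁ b₂ (s₁ k iD) (s₂ k jD) c₁ c₂ (X 0 ω'))) := fun ω' => by
        rw [gcTD_def]
        exact tendsto_atTop_ciInf (hanti_r ω') (hbddD 0 ω' _ _ c₁ c₂)
      have hlim := integral_tendsto_of_tendsto_of_antitone hint_r
        (hTDint _ _ c₁ c₂ hub1 hub2) (ae_of_all _ hanti_r) (ae_of_all _ htend)
      refine ge_of_tendsto hlim (Filter.Eventually.of_forall fun r => ?_)
      rw [← hF (gcGD b₁ b₂ (s₁ k iD) (s₂ k jD) c₁ c₂ r)]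
      have hz1 : min t.1 (gcGD b₁ b₂ (s₁ k iD) (s₂ k jD) c₁ c₂ r).1 ≤ b₁ :=
        min_le_of_left_le htb1
      have hz2 : min t.2 (gcGD b₁ b₂ (s₁ k iD) (s₂ k jD) c₁ c₂ r).2 ≤ b₂ :=
        min_le_of_left_le htb2
      have hm1 : F (min t.1 (gcGD b₁ b₂ (s₁ k iD) (s₂ k jD) c₁ c₂ r).1,
          min t.2 (gcGD b₁ b₂ (s₁ k iD) (s₂ k jD) c₁ c₂ r).2) ≤
          F (gcGD b₁ b₂ (s₁ k iD) (s₂ k jD) c₁ c₂ r) :=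
        hFmono _ _ (Prod.le_def.2 ⟨min_le_right _ _, min_le_right _ _⟩)
          (Prod.le_def.1 (gcGD_le hub1 hub2 c₁ c₂ r)).1
          (Prod.le_def.1 (gcGD_le hub1 hub2 c₁ c₂ r)).2
      have hm2 := hkey (min t.1 (gcGD b₁ b₂ (s₁ k iD) (s₂ k jD) c₁ c₂ r).1)
        (min t.2 (gcGD b₁ b₂ (s₁ k iD) (s₂ k jD) c₁ c₂ r).2) t.1 t.2
        (min_le_left _ _) (min_le_left _ _) htb1 htb2
      have hm3 := hγ₁ r
      have hm4 := hγ₂ r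
      linarith
    -- empirical bounds at this n
    have hup : (n : ℝ)⁻¹ * ∑ m ∈ Finset.range n, X m ω t ≤
        (n : ℝ)⁻¹ * ∑ m ∈ Finset.range n, gcTU (s₁ k iU) (s₂ k jU) c₁ c₂ (X m ω) := by
      obtain ⟨r₁, hr₁⟩ := hδ₁
      obtain ⟨r₂, hr₂⟩ := hδ₂
      refine mul_le_mul_of_nonneg_left (Finset.sum_le_sum fun m _ => ?_) (by positivity)
      have hle : t ≤ gcGU (s₁ k iU) (s₂ k jU) c₁ c₂ (max r₁ r₂) :=
        Prod.le_def.2 ⟨hr₁ _ (le_max_left _ _), hr₂ _ (le_max_right _ _)⟩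
      exact le_trans (hX_mono m ω hle)
        (le_ciSup (hbddU m ω _ _ c₁ c₂ hvb1 hvb2) (max r₁ r₂))
    have hdn : (n : ℝ)⁻¹ * ∑ m ∈ Finset.range n, gcTD b₁ b₂ (s₁ k iD) (s₂ k jD) c₁ c₂ (X m ω) ≤
        (n : ℝ)⁻¹ * ∑ m ∈ Finset.range n, X m ω t := by
      obtain ⟨r₁, hr₁⟩ := hδ'₁
      obtain ⟨r₂, hr₂⟩ := hδ'₂
      refine mul_le_mul_of_nonneg_left (Finset.sum_le_sum fun m _ => ?_) (by positivity)
      have hle : gcGD b₁ b₂ (s₁ k iD) (s₂ k jD) c₁ c₂ (max r₁ r₂) ≤ t :=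
        Prod.le_def.2 ⟨hr₁ _ (le_max_left _ _), hr₂ _ (le_max_right _ _)⟩
      exact le_trans (ciInf_le (hbddD m ω _ _ c₁ c₂) (max r₁ r₂)) (hX_mono m ω hle)
    -- deviations at this n
    have hdevU := (hdevn iU (Finset.mem_range.2 (by omega)) jU
      (Finset.mem_range.2 (by omega)) c₁ c₂).1
    have hdevD := (hdevn iD (Finset.mem_range.2 (by omega)) jD
      (Finset.mem_range.2 (by omega)) c₁ c₂).2
    have hFt : F (t.1, t.2) = F t := by rw [Prod.mk.eta]
    have h3eq : 3 / ((k : ℝ) + 1) = ε + (ε + ε) := by rw [hεdef]; ring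
    have habsU := abs_le.1 hdevU
    have habsD := abs_le.1 hdevD
    show |(n : ℝ)⁻¹ * ∑ m ∈ Finset.range n, X m ω t - F t| ≤ 3 / ((k : ℝ) + 1)
    rw [← hFt, h3eq]
    refine abs_le.2 ⟨?_, ?_⟩
    · linarith [hdn, hMD, habsD.1, habsD.2]
    · linarith [hup, hMU, habsU.1, habsU.2]
  -- conclude
  rw [Metric.tendsto_atTop]
  intro ε' hε'
  obtain ⟨k, hk⟩ := exists_nat_one_div_lt (show (0 : ℝ) < ε' / 3 by positivity)
  obtain ⟨N, hN⟩ := Filter.eventually_atTop.1 (hev k)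
  refine ⟨N, fun n hn => ?_⟩
  rw [Real.dist_eq, sub_zero, abs_of_nonneg (hG0 n)]
  have h3 : (3 : ℝ) / ((k : ℝ) + 1) = 3 * (1 / ((k : ℝ) + 1)) := by ring
  calc (⨆ t : (Set.Icc a₁ b₁ ×ˢ Set.Icc a₂ b₂ : Set (ℝ × ℝ)),
      |(n : ℝ)⁻¹ * ∑ m ∈ Finset.range n, X m ω t - F t|) ≤ 3 / ((k : ℝ) + 1) := hN n hn
    _ < ε' := by rw [h3]; linarith
end

section
/- Let a < b be real numbers. Let f : ℝ → ℝ and fₙ : ℝ → ℝ (n ∈ ℕ) be Borel measurable functions such that f is bounded on [a,b], eVariationOn f (Set.Icc a b) < ∞, and fₙ → f uniformly on [a,b]. Let g and gₙ (n ∈ ℕ) be Stieltjes functions (monotone nondecreasing right-continuous functions ℝ → ℝ, with associated Lebesgue–Stieltjes measures g.measure and gₙ.measure), and assume sup_{x ∈ [a,b]} |gₙ(x) − g(x)| → 0 as n → ∞. Then sup_{t ∈ [a,b]} | ∫_{x ∈ Ioc a t} fₙ(x) ∂(gₙ.measure) − ∫_{x ∈ Ioc a t} f(x) ∂(g.measure)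 | → 0 as n → ∞. -/
open Filter Topology MeasureTheory

section HellyBrayAux
open Set


lemma hb_Ioc (g g' : StieltjesFunction ℝ) {a b c t ε : ℝ}
    (hε : ∀ x ∈ Set.Icc a b, |g x - g' x| ≤ ε)
    (hac : a ≤ c) (hct : c ≤ t) (htb : t ≤ b) :
    |(g.measure (Set.Ioc c t)).toReal - (g'.measure (Set.Ioc c t)).toReal| ≤ 2 * ε := by
  rw [StieltjesFunction.measure_Ioc, StieltjesFunction.measure_Ioc,
    ENNReal.toReal_ofReal (sub_nonneg.2 (g.mono hct)),
    ENNReal.toReal_ofReal (sub_nonneg.2 (g'.mono hct))]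
  have h1 := hε t ⟨hac.trans hct, htb⟩
  have h2 := hε c ⟨hac, hct.trans htb⟩
  have : g t - g c - (g' t - g' c) = (g t - g' t) - (g c - g' c) := by ring
  rw [this]
  calc |(g t - g' t) - (g c - g' c)| ≤ |g t - g' t| + |g c - g' c| := abs_sub _ _
  _ ≤ ε + ε := add_le_add h1 h2
  _ = 2 * ε := by ring

lemma hb_leftLim (g g' : StieltjesFunction ℝ) {a b c ε : ℝ}
    (hε : ∀ x ∈ Set.Icc a b, |g x - g' x| ≤ ε) (hac : a < c) (hcb : c ≤ b) :
    |Function.leftLim g c - Function.leftLim g' c| ≤ ε := by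
  have h1 : Tendsto (fun x => |g x - g' x|) (𝓝[<] c)
      (𝓝 |Function.leftLim g c - Function.leftLim g' c|) :=
    ((g.mono.tendsto_leftLim c).sub (g'.mono.tendsto_leftLim c)).abs
  apply le_of_tendsto h1
  filter_upwards [Ioo_mem_nhdsLT_of_mem ⟨hac, le_refl c⟩] with x hx
  exact hε x ⟨hx.1.le, hx.2.le.trans hcb⟩

lemma hb_Icc (g g' : StieltjesFunction ℝ) {a b c t ε : ℝ}
    (hε : ∀ x ∈ Set.Icc a b, |g x - g' x| ≤ ε)
    (hac : a < c) (hct : c ≤ t) (htb : t ≤ b) :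
    |(g.measure (Set.Icc c t)).toReal - (g'.measure (Set.Icc c t)).toReal| ≤ 2 * ε := by
  have hl : Function.leftLim g c ≤ g t := (g.mono.leftLim_le (le_refl c)).trans (g.mono hct)
  have hl' : Function.leftLim g' c ≤ g' t := (g'.mono.leftLim_le (le_refl c)).trans (g'.mono hct)
  rw [StieltjesFunction.measure_Icc, StieltjesFunction.measure_Icc,
    ENNReal.toReal_ofReal (sub_nonneg.2 hl), ENNReal.toReal_ofReal (sub_nonneg.2 hl')]
  have h1 := hε t ⟨hac.le.trans hct, htb⟩
  have h2 := hb_leftLim g g' hε hac (hct.trans htb)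
  have : g t - Function.leftLim g c - (g' t - Function.leftLim g' c)
      = (g t - g' t) - (Function.leftLim g c - Function.leftLim g' c) := by ring
  rw [this]
  calc |(g t - g' t) - (Function.leftLim g c - Function.leftLim g' c)|
      ≤ |g t - g' t| + |Function.leftLim g c - Function.leftLim g' c| := abs_sub _ _
  _ ≤ ε + ε := add_le_add h1 h2
  _ = 2 * ε := by ring


lemma superlevel_cases {P : ℝ → ℝ} (hP : Monotone P) {y a t : ℝ}
    (hne : ({x | y < P x} ∩ Set.Ioc a t).Nonempty) :
    ∃ c, a ≤ c ∧ c ≤ t ∧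
      ({x | y < P x} ∩ Set.Ioc a t = Set.Ioc c t ∨
       (a < c ∧ {x | y < P x} ∩ Set.Ioc a t = Set.Icc c t)) := by
  set S := {x | y < P x} ∩ Set.Ioc a t with hSdef
  have hbdd : BddBelow S := ⟨a, fun x hx => hx.2.1.le⟩
  set c := sInf S with hcdef
  obtain ⟨x₀, hx₀⟩ := hne
  have hca : a ≤ c := le_csInf ⟨x₀, hx₀⟩ (fun x hx => hx.2.1.le)
  have hct : c ≤ t := (csInf_le hbdd hx₀).trans hx₀.2.2
  have hmem : ∀ x, x ∈ Set.Ioc a t → c < x → x ∈ S := by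
    intro x hx hcx
    obtain ⟨z, hz, hzx⟩ := exists_lt_of_csInf_lt ⟨x₀, hx₀⟩ hcx
    exact ⟨lt_of_lt_of_le hz.1 (hP hzx.le), hx⟩
  refine ⟨c, hca, hct, ?_⟩
  by_cases hc : c ∈ S
  · refine Or.inr ⟨hc.2.1, ?_⟩
    ext x
    constructor
    · intro hx; exact ⟨csInf_le hbdd hx, hx.2.2⟩
    · intro hx
      rcases eq_or_lt_of_le hx.1 with h | h
      · exact h ▸ hc
      · exact hmem x ⟨hc.2.1.trans h, hx.2⟩ h
  · refine Or.inl ?_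
    ext x
    constructor
    · intro hx
      refine ⟨lt_of_le_of_ne (csInf_le hbdd hx) ?_, hx.2.2⟩
      intro h; exact hc (h ▸ hx)
    · intro hx
      exact hmem x ⟨lt_of_le_of_lt hca hx.1, hx.2⟩ hx.1

lemma hb_superlevel (g g' : StieltjesFunction ℝ) {a b t ε : ℝ} {P : ℝ → ℝ}
    (hP : Monotone P)
    (hε : ∀ x ∈ Set.Icc a b, |g x - g' x| ≤ ε)
    (hat : a ≤ t) (htb : t ≤ b) (hε0 : 0 ≤ ε) (y : ℝ) :
    |(g.measure ({x | y < P x} ∩ Set.Ioc a t)).toReal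
      - (g'.measure ({x | y < P x} ∩ Set.Ioc a t)).toReal| ≤ 2 * ε := by
  rcases Set.eq_empty_or_nonempty ({x | y < P x} ∩ Set.Ioc a t) with h | h
  · rw [h]; simp; linarith
  · obtain ⟨c, hca, hct, hcase⟩ := superlevel_cases hP h
    rcases hcase with h' | ⟨hac, h'⟩
    · rw [h']; exact hb_Ioc g g' hε hca hct htb
    · rw [h']; exact hb_Icc g g' hε hac hct htb

lemma layercake_aux (g : StieltjesFunction ℝ) {a t : ℝ} {P : ℝ → ℝ}
    (hP : Monotone P) (hat : a ≤ t) :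
    ∫ x in Set.Ioc a t, (P x - P a) ∂g.measure
      = ∫ s in Set.Ioi (0:ℝ),
          (g.measure ({x | P a + s < P x} ∩ Set.Ioc a t)).toReal := by
  have hPm : Measurable P := hP.measurable
  have hfin : g.measure (Set.Ioc a t) ≠ ⊤ := by
    rw [StieltjesFunction.measure_Ioc]; exact ENNReal.ofReal_ne_top
  haveI : IsFiniteMeasure (g.measure.restrict (Set.Ioc a t)) :=
    ⟨by rw [Measure.restrict_apply MeasurableSet.univ, Set.univ_inter]; exact hfin.lt_top⟩
  have hint : Integrable (fun x => P x - P a) (g.measure.restrict (Set.Ioc a t)) := by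
    refine Integrable.mono' (integrable_const (P t - P a))
      ((hPm.sub measurable_const).aestronglyMeasurable) ?_
    rw [ae_restrict_iff' measurableSet_Ioc]
    refine ae_of_all _ (fun x hx => ?_)
    rw [Real.norm_eq_abs, abs_of_nonneg (sub_nonneg.2 (hP hx.1.le))]
    exact sub_le_sub_right (hP hx.2) _
  have hnn : 0 ≤ᵐ[g.measure.restrict (Set.Ioc a t)] (fun x => P x - P a) :=
    (ae_restrict_iff' measurableSet_Ioc).2
      (ae_of_all _ (fun x hx => sub_nonneg.2 (hP hx.1.le)))
  rw [hint.integral_eq_integral_meas_lt hnn]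
  refine setIntegral_congr_fun measurableSet_Ioi (fun s _ => ?_)
  have hmeas : MeasurableSet {x : ℝ | s < P x - P a} :=
    measurableSet_lt measurable_const (hPm.sub measurable_const)
  rw [measureReal_def, Measure.restrict_apply hmeas]
  congr 2
  ext x
  simp only [Set.mem_setOf_eq, lt_sub_iff_add_lt']

set_option maxHeartbeats 1000000 in
lemma mono_est (g g' : StieltjesFunction ℝ) {a b t ε : ℝ} {P : ℝ → ℝ}
    (hP : Monotone P) (hε0 : 0 ≤ ε)
    (hε : ∀ x ∈ Set.Icc a b, |g x - g' x| ≤ ε)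
    (hat : a ≤ t) (htb : t ≤ b) :
    |(∫ x in Set.Ioc a t, P x ∂g.measure) - ∫ x in Set.Ioc a t, P x ∂g'.measure|
      ≤ 2 * ε * (P b - P a) + 2 * ε * |P a| := by
  have hPm : Measurable P := hP.measurable
  have hab : a ≤ b := hat.trans htb
  -- integrability of P w.r.t. each restricted measure
  have hintP : ∀ G : StieltjesFunction ℝ,
      Integrable P (G.measure.restrict (Set.Ioc a t)) := by
    intro G
    have hfin : G.measure (Set.Ioc a t) ≠ ⊤ := by
      rw [StieltjesFunction.measure_Ioc]; exact ENNReal.ofReal_ne_top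
    haveI : IsFiniteMeasure (G.measure.restrict (Set.Ioc a t)) :=
      ⟨by rw [Measure.restrict_apply MeasurableSet.univ, Set.univ_inter]; exact hfin.lt_top⟩
    refine Integrable.mono' (integrable_const (max |P a| |P b|))
      hPm.aestronglyMeasurable ?_
    rw [ae_restrict_iff' measurableSet_Ioc]
    refine ae_of_all _ (fun x hx => ?_)
    rw [Real.norm_eq_abs]
    rcases abs_cases (P x) with ⟨h1, _⟩ | ⟨h1, _⟩
    · rw [h1]
      exact le_max_of_le_right ((hP (hx.2.trans htb)).trans (le_abs_self _))
    · rw [h1]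
      exact le_max_of_le_left ((neg_le_neg (hP hx.1.le)).trans (neg_le_abs _))
  -- decompose the integrals
  have hdecomp : ∀ G : StieltjesFunction ℝ,
      ∫ x in Set.Ioc a t, P x ∂G.measure
        = (∫ x in Set.Ioc a t, (P x - P a) ∂G.measure)
          + (G.measure (Set.Ioc a t)).toReal * P a := by
    intro G
    have hfin : G.measure (Set.Ioc a t) ≠ ⊤ := by
      rw [StieltjesFunction.measure_Ioc]; exact ENNReal.ofReal_ne_top
    haveI : IsFiniteMeasure (G.measure.restrict (Set.Ioc a t)) :=
      ⟨by rw [Measure.restrict_apply MeasurableSet.univ, Set.univ_inter]; exact hfin.lt_top⟩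
    rw [integral_sub (hintP G) (integrable_const _), setIntegral_const, smul_eq_mul, measureReal_def]
    ring
  rw [hdecomp g, hdecomp g']
  set A : ℝ → ℝ := fun s => (g.measure ({x | P a + s < P x} ∩ Set.Ioc a t)).toReal with hA
  set B : ℝ → ℝ := fun s => (g'.measure ({x | P a + s < P x} ∩ Set.Ioc a t)).toReal with hB
  have hABd : ∀ s, 0 < s → |A s - B s| ≤ 2 * ε := fun s _ =>
    hb_superlevel g g' hP hε hat htb hε0 (P a + s)
  set M := P t - P a with hM
  have hM0 : 0 ≤ M := sub_nonneg.2 (hP hat)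
  -- vanishing beyond M
  have hvan : ∀ s, M ≤ s → {x | P a + s < P x} ∩ Set.Ioc a t = ∅ := by
    intro s hs
    ext x
    simp only [Set.mem_inter_iff, Set.mem_setOf_eq, Set.mem_Ioc, Set.mem_empty_iff_false,
      iff_false, not_and, and_imp]
    intro hx hax hxt
    have : P x ≤ P a + M := by rw [hM]; linarith [hP hxt]
    linarith
  -- restrict the layercake integrals to Ioc 0 M
  have hres : ∀ (C : ℝ → ℝ), (∀ s, M ≤ s → C s = 0) →
      ∫ s in Set.Ioi (0:ℝ), C s = ∫ s in Set.Ioc (0:ℝ) M, C s := by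
    intro C hC
    refine setIntegral_eq_of_subset_of_forall_diff_eq_zero measurableSet_Ioi
      Set.Ioc_subset_Ioi_self (fun s hs => ?_)
    refine hC s ?_
    rcases hs with ⟨hs1, hs2⟩
    simp only [Set.mem_Ioc, not_and, not_le] at hs2
    exact (hs2 hs1).le
  have hAvan : ∀ s, M ≤ s → A s = 0 := by
    intro s hs; rw [hA]; simp only; rw [hvan s hs]; simp
  have hBvan : ∀ s, M ≤ s → B s = 0 := by
    intro s hs; rw [hB]; simp only; rw [hvan s hs]; simp
  -- antitone & integrable
  have hanti : ∀ (G : StieltjesFunction ℝ),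
      Antitone (fun s => (G.measure ({x | P a + s < P x} ∩ Set.Ioc a t)).toReal) := by
    intro G s s' hss'
    have hfin : G.measure ({x | P a + s < P x} ∩ Set.Ioc a t) ≠ ⊤ := by
      refine ne_top_of_le_ne_top ?_ (measure_mono Set.inter_subset_right)
      rw [StieltjesFunction.measure_Ioc]; exact ENNReal.ofReal_ne_top
    refine ENNReal.toReal_mono hfin (measure_mono (Set.inter_subset_inter_left _ ?_))
    intro x hx
    have hx' : P a + s' < P x := hx
    exact lt_of_le_of_lt (add_le_add le_rfl hss') hx'
  have hintC : ∀ (G : StieltjesFunction ℝ),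
      Integrable (fun s => (G.measure ({x | P a + s < P x} ∩ Set.Ioc a t)).toReal)
        (volume.restrict (Set.Ioc (0:ℝ) M)) := by
    intro G
    haveI : IsFiniteMeasure (volume.restrict (Set.Ioc (0:ℝ) M)) :=
      ⟨by rw [Measure.restrict_apply MeasurableSet.univ, Set.univ_inter, Real.volume_Ioc]
          exact ENNReal.ofReal_lt_top⟩
    refine Integrable.mono' (integrable_const ((G.measure (Set.Ioc a t)).toReal))
      (hanti G).measurable.aestronglyMeasurable (ae_of_all _ (fun s => ?_))
    rw [Real.norm_eq_abs, abs_of_nonneg ENNReal.toReal_nonneg]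
    refine ENNReal.toReal_mono ?_ (measure_mono Set.inter_subset_right)
    rw [StieltjesFunction.measure_Ioc]; exact ENNReal.ofReal_ne_top
  -- layer cake difference bound
  have hlayer : |(∫ x in Set.Ioc a t, (P x - P a) ∂g.measure)
      - ∫ x in Set.Ioc a t, (P x - P a) ∂g'.measure| ≤ 2 * ε * (P b - P a) := by
    rw [layercake_aux g hP hat, layercake_aux g' hP hat, hres A hAvan, hres B hBvan,
      ← integral_sub (hintC g) (hintC g')]
    have hvol : volume (Set.Ioc (0:ℝ) M) < ⊤ := by
      rw [Real.volume_Ioc]; exact ENNReal.ofReal_lt_top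
    have := norm_setIntegral_le_of_norm_le_const_ae' (μ := volume) (s := Set.Ioc (0:ℝ) M)
      (f := fun s => A s - B s) (C := 2 * ε) hvol
      (ae_of_all _ (fun s hs => by rw [Real.norm_eq_abs]; exact hABd s hs.1))
    rw [Real.norm_eq_abs, measureReal_def] at this
    refine this.trans ?_
    rw [Real.volume_Ioc, ENNReal.toReal_ofReal (by linarith : (0:ℝ) ≤ M - 0)]
    have : M - 0 ≤ P b - P a := by rw [hM]; linarith [hP htb]
    nlinarith
  -- constant part bound
  have hconst : |(g.measure (Set.Ioc a t)).toReal * P a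
      - (g'.measure (Set.Ioc a t)).toReal * P a| ≤ 2 * ε * |P a| := by
    rw [← sub_mul, abs_mul]
    exact mul_le_mul_of_nonneg_right (hb_Ioc g g' hε le_rfl hat htb) (abs_nonneg _)
  calc |(∫ x in Set.Ioc a t, (P x - P a) ∂g.measure) + (g.measure (Set.Ioc a t)).toReal * P a
      - ((∫ x in Set.Ioc a t, (P x - P a) ∂g'.measure) + (g'.measure (Set.Ioc a t)).toReal * P a)|
      ≤ |(∫ x in Set.Ioc a t, (P x - P a) ∂g.measure)
          - ∫ x in Set.Ioc a t, (P x - P a) ∂g'.measure|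
        + |(g.measure (Set.Ioc a t)).toReal * P a - (g'.measure (Set.Ioc a t)).toReal * P a| := by
        have : (∫ x in Set.Ioc a t, (P x - P a) ∂g.measure) + (g.measure (Set.Ioc a t)).toReal * P a
          - ((∫ x in Set.Ioc a t, (P x - P a) ∂g'.measure) + (g'.measure (Set.Ioc a t)).toReal * P a)
          = ((∫ x in Set.Ioc a t, (P x - P a) ∂g.measure)
              - ∫ x in Set.Ioc a t, (P x - P a) ∂g'.measure)
            + ((g.measure (Set.Ioc a t)).toReal * P a - (g'.measure (Set.Ioc a t)).toReal * P a) := by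
          ring
        rw [this]
        exact abs_add_le _ _
  _ ≤ 2 * ε * (P b - P a) + 2 * ε * |P a| := add_le_add hlayer hconst

lemma integrable_mono_stieltjes (G : StieltjesFunction ℝ) {a t : ℝ} {P : ℝ → ℝ}
    (hP : Monotone P) : Integrable P (G.measure.restrict (Set.Ioc a t)) := by
  have hfin : G.measure (Set.Ioc a t) ≠ ⊤ := by
    rw [StieltjesFunction.measure_Ioc]; exact ENNReal.ofReal_ne_top
  haveI : IsFiniteMeasure (G.measure.restrict (Set.Ioc a t)) :=
    ⟨by rw [Measure.restrict_apply MeasurableSet.univ, Set.univ_inter]; exact hfin.lt_top⟩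
  refine Integrable.mono' (integrable_const (max |P a| |P t|))
    hP.measurable.aestronglyMeasurable ?_
  rw [ae_restrict_iff' measurableSet_Ioc]
  refine ae_of_all _ (fun x hx => ?_)
  rw [Real.norm_eq_abs]
  rcases abs_cases (P x) with ⟨h1, _⟩ | ⟨h1, _⟩
  · rw [h1]
    exact le_max_of_le_right ((hP hx.2).trans (le_abs_self _))
  · rw [h1]
    exact le_max_of_le_left ((neg_le_neg (hP hx.1.le)).trans (neg_le_abs _))

lemma bv_est (f : ℝ → ℝ) {a b : ℝ} (hab : a ≤ b)
    (hf_var : eVariationOn f (Set.Icc a b) < ⊤) :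
    ∃ K : ℝ, 0 ≤ K ∧ ∀ (g g' : StieltjesFunction ℝ) (ε : ℝ), 0 ≤ ε →
      (∀ x ∈ Set.Icc a b, |g x - g' x| ≤ ε) →
      ∀ t ∈ Set.Icc a b,
        |(∫ x in Set.Ioc a t, f x ∂g.measure) - ∫ x in Set.Ioc a t, f x ∂g'.measure|
          ≤ K * ε := by
  have hbv : BoundedVariationOn f (Set.Icc a b) := hf_var.ne
  obtain ⟨p, q, hp, hq, hpq⟩ := hbv.locallyBoundedVariationOn.exists_monotoneOn_sub_monotoneOn
  have hclamp : Monotone (fun x : ℝ => max a (min x b)) :=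
    fun x y hxy => max_le_max le_rfl (min_le_min hxy le_rfl)
  have hmem : ∀ x : ℝ, max a (min x b) ∈ Set.Icc a b :=
    fun x => ⟨le_max_left _ _, max_le hab (min_le_right _ _)⟩
  have heq : ∀ x ∈ Set.Icc a b, max a (min x b) = x := by
    intro x hx
    rw [min_eq_left hx.2, max_eq_right hx.1]
  set P : ℝ → ℝ := fun x => p (max a (min x b)) with hPdef
  set Q : ℝ → ℝ := fun x => q (max a (min x b)) with hQdef
  have hPmono : Monotone P := fun x y hxy => hp (hmem x) (hmem y) (hclamp hxy)
  have hQmono : Monotone Q := fun x y hxy => hq (hmem x) (hmem y) (hclamp hxy)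
  have hfPQ : ∀ x ∈ Set.Icc a b, f x = P x - Q x := by
    intro x hx
    rw [hPdef, hQdef]
    simp only [heq x hx]
    rw [hpq]; rfl
  refine ⟨2 * (P b - P a) + 2 * |P a| + (2 * (Q b - Q a) + 2 * |Q a|), by
    have h1 : 0 ≤ P b - P a := sub_nonneg.2 (hPmono hab)
    have h2 : 0 ≤ Q b - Q a := sub_nonneg.2 (hQmono hab)
    positivity, ?_⟩
  intro g g' ε hε0 hε t ht
  have hint : ∀ G : StieltjesFunction ℝ,
      ∫ x in Set.Ioc a t, f x ∂G.measure
        = (∫ x in Set.Ioc a t, P x ∂G.measure) - ∫ x in Set.Ioc a t, Q x ∂G.measure := by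
    intro G
    rw [← integral_sub (integrable_mono_stieltjes G hPmono) (integrable_mono_stieltjes G hQmono)]
    refine setIntegral_congr_fun measurableSet_Ioc (fun x hx => ?_)
    exact hfPQ x ⟨hx.1.le, hx.2.trans ht.2⟩
  rw [hint g, hint g']
  have hP := mono_est g g' hPmono hε0 hε ht.1 ht.2
  have hQ := mono_est g g' hQmono hε0 hε ht.1 ht.2
  set Ipg := ∫ x in Set.Ioc a t, P x ∂g.measure
  set Ipg' := ∫ x in Set.Ioc a t, P x ∂g'.measure
  set Iqg := ∫ x in Set.Ioc a t, Q x ∂g.measure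
  set Iqg' := ∫ x in Set.Ioc a t, Q x ∂g'.measure
  have habs : |Ipg - Iqg - (Ipg' - Iqg')| ≤ |Ipg - Ipg'| + |Iqg - Iqg'| := by
    have : Ipg - Iqg - (Ipg' - Iqg') = (Ipg - Ipg') - (Iqg - Iqg') := by ring
    rw [this]; exact abs_sub _ _
  refine habs.trans ?_
  calc |Ipg - Ipg'| + |Iqg - Iqg'|
      ≤ (2 * ε * (P b - P a) + 2 * ε * |P a|) + (2 * ε * (Q b - Q a) + 2 * ε * |Q a|) :=
        add_le_add hP hQ
  _ = (2 * (P b - P a) + 2 * |P a| + (2 * (Q b - Q a) + 2 * |Q a|)) * ε := by ring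

end HellyBrayAux

/-- Uniform Helly–Bray-type continuity of the Stieltjes integral `(f, g) ↦ ∫_{(a,t]} f dg`:
if `fₙ → f` uniformly on `[a,b]` with `f` bounded and of finite variation there, and the
Stieltjes functions `gₙ` converge to `g` uniformly on `[a,b]`, then the integrals
`∫_{(a,t]} fₙ dgₙ` converge to `∫_{(a,t]} f dg` uniformly in `t ∈ [a,b]`. -/
theorem uniform_helly_bray (a b : ℝ) (hab : a < b)
    (f : ℝ → ℝ) (fn : ℕ → ℝ → ℝ)
    (hf_meas : Measurable f) (hfn_meas : ∀ n, Measurable (fn n))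
    (hf_bdd : ∃ C : ℝ, ∀ x ∈ Set.Icc a b, |f x| ≤ C)
    (hf_var : eVariationOn f (Set.Icc a b) < ⊤)
    (hfn_unif : TendstoUniformlyOn fn f atTop (Set.Icc a b))
    (g : StieltjesFunction ℝ) (gn : ℕ → StieltjesFunction ℝ)
    (hg_unif : Tendsto (fun n => ⨆ x : Set.Icc a b, |gn n x - g x|) atTop (𝓝 0)) :
    Tendsto (fun n => ⨆ t : Set.Icc a b,
        |(∫ x in Set.Ioc a (t : ℝ), fn n x ∂((gn n).measure))
          - ∫ x in Set.Ioc a (t : ℝ), f x ∂g.measure|)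
      atTop (𝓝 0) := by
  obtain ⟨C, hC⟩ := hf_bdd
  haveI hne : Nonempty (Set.Icc a b) := ⟨⟨a, le_rfl, hab.le⟩⟩
  set Eg : ℕ → ℝ := fun n => ⨆ x : Set.Icc a b, |gn n x - g x| with hEgdef
  -- pointwise bound from the sup for g
  have hEgbdd : ∀ n, BddAbove (Set.range fun x : Set.Icc a b => |gn n x - g x|) := by
    intro n
    refine ⟨max |gn n a| |gn n b| + max |g a| |g b|, ?_⟩
    rintro y ⟨⟨x, hx⟩, rfl⟩
    refine (abs_sub _ _).trans (add_le_add ?_ ?_)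
    · rcases abs_cases (gn n x) with ⟨h1, _⟩ | ⟨h1, _⟩
      · rw [h1]; exact le_max_of_le_right (((gn n).mono hx.2).trans (le_abs_self _))
      · rw [h1]; exact le_max_of_le_left ((neg_le_neg ((gn n).mono hx.1)).trans (neg_le_abs _))
    · rcases abs_cases (g x) with ⟨h1, _⟩ | ⟨h1, _⟩
      · rw [h1]; exact le_max_of_le_right ((g.mono hx.2).trans (le_abs_self _))
      · rw [h1]; exact le_max_of_le_left ((neg_le_neg (g.mono hx.1)).trans (neg_le_abs _))
  have hEg_le : ∀ n, ∀ x ∈ Set.Icc a b, |gn n x - g x| ≤ Eg n := by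
    intro n x hx
    exact le_ciSup (hEgbdd n) (⟨x, hx⟩ : Set.Icc a b)
  have hEg0 : ∀ n, 0 ≤ Eg n := fun n =>
    (abs_nonneg _).trans (hEg_le n a ⟨le_rfl, hab.le⟩)
  -- the BV constant
  obtain ⟨K, hK0, hKest⟩ := bv_est f hab.le hf_var
  -- sup distance for fn
  set Fn : ℕ → ℝ := fun n => ⨆ x : Set.Icc a b, |fn n x - f x| with hFndef
  have hunif := Metric.tendstoUniformlyOn_iff.1 hfn_unif
  have hFev : ∀ᶠ n in atTop, (∀ x ∈ Set.Icc a b, |fn n x - f x| ≤ Fn n) ∧ 0 ≤ Fn n := by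
    filter_upwards [hunif 1 one_pos] with n hn
    have hbdd : BddAbove (Set.range fun x : Set.Icc a b => |fn n x - f x|) := by
      refine ⟨1, ?_⟩
      rintro y ⟨⟨x, hx⟩, rfl⟩
      have := hn x hx
      rw [Real.dist_eq, abs_sub_comm] at this
      exact this.le
    have h1 : ∀ x ∈ Set.Icc a b, |fn n x - f x| ≤ Fn n :=
      fun x hx => le_ciSup hbdd (⟨x, hx⟩ : Set.Icc a b)
    exact ⟨h1, (abs_nonneg _).trans (h1 a ⟨le_rfl, hab.le⟩)⟩
  have hFn : Tendsto Fn atTop (𝓝 0) := by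
    rw [Metric.tendsto_atTop]
    intro ε hε
    obtain ⟨N, hN⟩ := eventually_atTop.1 (hunif (ε / 2) (by linarith))
    refine ⟨N, fun n hn => ?_⟩
    have hb2 : ∀ x : Set.Icc a b, |fn n (x : ℝ) - f (x : ℝ)| ≤ ε / 2 := by
      rintro ⟨x, hx⟩
      have := hN n hn x hx
      rw [Real.dist_eq, abs_sub_comm] at this
      exact this.le
    have hbdd : BddAbove (Set.range fun x : Set.Icc a b => |fn n x - f x|) :=
      ⟨ε / 2, by rintro y ⟨x, rfl⟩; exact hb2 x⟩
    have hle : Fn n ≤ ε / 2 := ciSup_le hb2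
    have hge : 0 ≤ Fn n :=
      (abs_nonneg _).trans (le_ciSup hbdd (⟨a, le_rfl, hab.le⟩ : Set.Icc a b))
    rw [Real.dist_eq, sub_zero, abs_of_nonneg hge]
    linarith
  -- convergence of the endpoints of gn
  have hgnb : Tendsto (fun n => gn n b - g b) atTop (𝓝 0) :=
    squeeze_zero_norm (fun n => hEg_le n b ⟨hab.le, le_rfl⟩) hg_unif
  have hgna : Tendsto (fun n => gn n a - g a) atTop (𝓝 0) :=
    squeeze_zero_norm (fun n => hEg_le n a ⟨le_rfl, hab.le⟩) hg_unif
  set D : ℕ → ℝ := fun n => Fn n * (gn n b - gn n a) + K * Eg n with hDdef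
  have hD : Tendsto D atTop (𝓝 0) := by
    have h1 : Tendsto (fun n => gn n b - gn n a) atTop (𝓝 (g b - g a)) := by
      have := hgnb.sub hgna
      rw [sub_zero] at this
      have heq : (fun n => gn n b - g b - (gn n a - g a)) =
          fun n => (gn n b - gn n a) - (g b - g a) := by ext n; ring
      rw [heq] at this
      exact tendsto_sub_nhds_zero_iff.1 this
    have := (hFn.mul h1).add (hg_unif.const_mul K)
    simpa using this
  -- the main eventual bound
  set S : ℕ → ℝ := fun n => ⨆ t : Set.Icc a b,
      |(∫ x in Set.Ioc a (t : ℝ), fn n x ∂((gn n).measure))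
        - ∫ x in Set.Ioc a (t : ℝ), f x ∂g.measure| with hSdef
  have hmain : ∀ᶠ n in atTop, 0 ≤ S n ∧ S n ≤ D n := by
    filter_upwards [hFev] with n hn
    obtain ⟨hFle, hF0⟩ := hn
    have hterm : ∀ t : Set.Icc a b,
        |(∫ x in Set.Ioc a (t : ℝ), fn n x ∂((gn n).measure))
          - ∫ x in Set.Ioc a (t : ℝ), f x ∂g.measure| ≤ D n := by
      rintro ⟨t, hat, htb⟩
      have hsub : Set.Ioc a t ⊆ Set.Icc a b := fun x hx => ⟨hx.1.le, hx.2.trans htb⟩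
      have hfinn : (gn n).measure (Set.Ioc a t) ≠ ⊤ := by
        rw [StieltjesFunction.measure_Ioc]; exact ENNReal.ofReal_ne_top
      haveI : IsFiniteMeasure ((gn n).measure.restrict (Set.Ioc a t)) :=
        ⟨by rw [Measure.restrict_apply MeasurableSet.univ, Set.univ_inter]; exact hfinn.lt_top⟩
      have hintf : Integrable f ((gn n).measure.restrict (Set.Ioc a t)) := by
        refine Integrable.mono' (integrable_const C) hf_meas.aestronglyMeasurable ?_
        rw [ae_restrict_iff' measurableSet_Ioc]
        exact ae_of_all _ (fun x hx => by rw [Real.norm_eq_abs]; exact hC x (hsub hx))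
      have hintfn : Integrable (fn n) ((gn n).measure.restrict (Set.Ioc a t)) := by
        refine Integrable.mono' (integrable_const (C + Fn n))
          (hfn_meas n).aestronglyMeasurable ?_
        rw [ae_restrict_iff' measurableSet_Ioc]
        refine ae_of_all _ (fun x hx => ?_)
        rw [Real.norm_eq_abs]
        calc |fn n x| = |f x + (fn n x - f x)| := by ring_nf
        _ ≤ |f x| + |fn n x - f x| := abs_add_le _ _
        _ ≤ C + Fn n := add_le_add (hC x (hsub hx)) (hFle x (hsub hx))
      -- first piece
      have hpiece1 : |(∫ x in Set.Ioc a t, fn n x ∂((gn n).measure))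
          - ∫ x in Set.Ioc a t, f x ∂((gn n).measure)| ≤ Fn n * (gn n b - gn n a) := by
        rw [← integral_sub hintfn hintf]
        have hb := norm_setIntegral_le_of_norm_le_const_ae' (μ := (gn n).measure)
          (s := Set.Ioc a t) (f := fun x => fn n x - f x) (C := Fn n) hfinn.lt_top
          (ae_of_all _ (fun x hx => by rw [Real.norm_eq_abs]; exact hFle x (hsub hx)))
        rw [Real.norm_eq_abs, measureReal_def] at hb
        refine hb.trans ?_
        rw [StieltjesFunction.measure_Ioc,
          ENNReal.toReal_ofReal (sub_nonneg.2 ((gn n).mono hat))]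
        exact mul_le_mul_of_nonneg_left
          (sub_le_sub_right ((gn n).mono htb) _) hF0
      -- second piece
      have hpiece2 : |(∫ x in Set.Ioc a t, f x ∂((gn n).measure))
          - ∫ x in Set.Ioc a t, f x ∂g.measure| ≤ K * Eg n :=
        hKest (gn n) g (Eg n) (hEg0 n) (hEg_le n) t ⟨hat, htb⟩
      calc |(∫ x in Set.Ioc a t, fn n x ∂((gn n).measure))
          - ∫ x in Set.Ioc a t, f x ∂g.measure|
          ≤ |(∫ x in Set.Ioc a t, fn n x ∂((gn n).measure))
              - ∫ x in Set.Ioc a t, f x ∂((gn n).measure)|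
            + |(∫ x in Set.Ioc a t, f x ∂((gn n).measure))
              - ∫ x in Set.Ioc a t, f x ∂g.measure| := abs_sub_le _ _ _
      _ ≤ Fn n * (gn n b - gn n a) + K * Eg n := add_le_add hpiece1 hpiece2
    have hbddS : BddAbove (Set.range fun t : Set.Icc a b =>
        |(∫ x in Set.Ioc a (t : ℝ), fn n x ∂((gn n).measure))
          - ∫ x in Set.Ioc a (t : ℝ), f x ∂g.measure|) :=
      ⟨D n, by rintro y ⟨t, rfl⟩; exact hterm t⟩
    constructor
    · exact (abs_nonneg _).trans (le_ciSup hbddS (⟨a, le_rfl, hab.le⟩ : Set.Icc a b))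
    · exact ciSup_le hterm
  refine tendsto_of_tendsto_of_tendsto_of_le_of_le' tendsto_const_nhds hD
    (hmain.mono fun n h => h.1) (hmain.mono fun n h => h.2)
end

section
/- Let ν be a finite measure on ℝ × ℝ (with the Borel product σ-algebra), let s ≤ τ₁ and s ≤ τ₂ be real numbers, and set A := (Ioc s τ₁) ×ˢ (Ioc s τ₂). Let f : ℝ × ℝ → ℝ be measurable with f ≥ 0, and assume ν({x ∈ A | f x = 0}) = 0 and that the function x ↦ (f x)⁻¹ is ν-integrable on A (with the convention 0⁻¹ = 0). Then, as ε decreases to 0 along positive reals, sup_{(t₁,t₂) ∈ [s,τ₁]×[s,τ₂]} | ∫_{x ∈ (Ioc s t₁) ×ˢ (Ioc s t₂)} (max (f x) ε)⁻¹ ∂ν − ∫_{x ∈ (Ioc s t₁) ×ˢ (Ioc s t₂)} (f x)⁻¹ ∂ν | → 0; i.e., this supremum tends to 0 along the filter 𝓝[>] 0. -/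
open Filter Topology MeasureTheory

/-- Uniform ε-perturbation for bivariate conditional transition rates: if the finite measure `ν`
does not charge the zero set of the nonnegative function `f` on the rectangle
`(s,τ₁] × (s,τ₂]` and `f⁻¹` is `ν`-integrable there, then the perturbed integrals
`∫ (f ∨ ε)⁻¹ dν` over `(s,t₁] × (s,t₂]` converge, uniformly in `(t₁,t₂) ∈ [s,τ₁] × [s,τ₂]`,
to the unperturbed integrals `∫ f⁻¹ dν` as `ε ↓ 0`. -/
theorem uniform_tendsto_perturbed_inv_integral
    (ν : Measure (ℝ × ℝ)) [IsFiniteMeasure ν]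
    (s τ₁ τ₂ : ℝ) (h₁ : s ≤ τ₁) (h₂ : s ≤ τ₂)
    (f : ℝ × ℝ → ℝ) (hf : Measurable f) (hf_nonneg : ∀ x, 0 ≤ f x)
    (hnull : ν {x ∈ (Set.Ioc s τ₁ ×ˢ Set.Ioc s τ₂ : Set (ℝ × ℝ)) | f x = 0} = 0)
    (hint : IntegrableOn (fun x => (f x)⁻¹) (Set.Ioc s τ₁ ×ˢ Set.Ioc s τ₂) ν) :
    Tendsto (fun ε : ℝ => ⨆ t : (Set.Icc s τ₁ ×ˢ Set.Icc s τ₂ : Set (ℝ × ℝ)),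
        |(∫ x in Set.Ioc s (t : ℝ × ℝ).1 ×ˢ Set.Ioc s (t : ℝ × ℝ).2, (max (f x) ε)⁻¹ ∂ν)
          - ∫ x in Set.Ioc s (t : ℝ × ℝ).1 ×ˢ Set.Ioc s (t : ℝ × ℝ).2, (f x)⁻¹ ∂ν|)
      (𝓝[>] 0) (𝓝 0) := by
  set A : Set (ℝ × ℝ) := Set.Ioc s τ₁ ×ˢ Set.Ioc s τ₂ with hA
  have hAm : MeasurableSet A := (measurableSet_Ioc.prod measurableSet_Ioc)
  -- a.e. positivity of f on A
  have hpos : ∀ᵐ x ∂(ν.restrict A), 0 < f x := by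
    have h0 : (ν.restrict A) {x | f x = 0} = 0 := by
      have hm0 : MeasurableSet {x : ℝ × ℝ | f x = 0} := hf (measurableSet_singleton 0)
      rw [Measure.restrict_apply hm0]
      · have : {x | f x = 0} ∩ A = {x ∈ A | f x = 0} := by
          ext x; simp [and_comm]
        rw [this]; exact hnull
    have : ∀ᵐ x ∂(ν.restrict A), f x ≠ 0 := by
      rw [ae_iff]; simpa using h0
    filter_upwards [this] with x hx
    exact lt_of_le_of_ne (hf_nonneg x) (Ne.symm hx)
  -- the difference function
  set F : ℝ → ℝ × ℝ → ℝ := fun ε x => (f x)⁻¹ - (max (f x) ε)⁻¹ with hF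
  -- g ε := ∫_A F ε
  have hFmeas : ∀ ε : ℝ, Measurable (F ε) := fun ε =>
    (hf.inv).sub ((hf.max measurable_const).inv)
  have hFbound : ∀ ε ∈ Set.Ioi (0:ℝ), ∀ᵐ x ∂(ν.restrict A), ‖F ε x‖ ≤ (f x)⁻¹ := by
    intro ε hε
    filter_upwards [hpos] with x hx
    have hmax : (0:ℝ) < max (f x) ε := lt_max_of_lt_left hx
    have h1 : (max (f x) ε)⁻¹ ≤ (f x)⁻¹ := by
      exact inv_anti₀ hx (le_max_left _ _)
    have h2 : 0 ≤ (max (f x) ε)⁻¹ := le_of_lt (inv_pos.2 hmax)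
    have hFnn : 0 ≤ F ε x := by simp only [hF]; linarith
    rw [Real.norm_eq_abs, abs_of_nonneg hFnn]
    simp only [hF]; linarith
  have hFlim : ∀ᵐ x ∂(ν.restrict A), Tendsto (fun ε => F ε x) (𝓝[>] (0:ℝ)) (𝓝 0) := by
    filter_upwards [hpos] with x hx
    have : ∀ᶠ ε in 𝓝[>] (0:ℝ), F ε x = 0 := by
      have hmem : Set.Ioo (0:ℝ) (f x) ∈ 𝓝[>] (0:ℝ) :=
        Ioo_mem_nhdsGT_of_mem ⟨le_refl _, hx⟩
      filter_upwards [hmem] with ε hε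
      simp [hF, max_eq_left hε.2.le]
    exact Tendsto.congr' (Filter.EventuallyEq.symm this) tendsto_const_nhds
  have hg : Tendsto (fun ε => ∫ x in A, F ε x ∂ν) (𝓝[>] (0:ℝ)) (𝓝 0) := by
    have := tendsto_integral_filter_of_dominated_convergence (μ := ν.restrict A)
      (F := F) (f := fun _ => (0:ℝ)) (bound := fun x => (f x)⁻¹)
      (Eventually.of_forall fun ε => (hFmeas ε).aestronglyMeasurable)
      (by filter_upwards [self_mem_nhdsWithin] with ε hε; exact hFbound ε hε)
      hint hFlim
    simpa using this
  -- squeeze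
  have key : ∀ᶠ ε in 𝓝[>] (0:ℝ),
      (⨆ t : (Set.Icc s τ₁ ×ˢ Set.Icc s τ₂ : Set (ℝ × ℝ)),
        |(∫ x in Set.Ioc s (t : ℝ × ℝ).1 ×ˢ Set.Ioc s (t : ℝ × ℝ).2, (max (f x) ε)⁻¹ ∂ν)
          - ∫ x in Set.Ioc s (t : ℝ × ℝ).1 ×ˢ Set.Ioc s (t : ℝ × ℝ).2, (f x)⁻¹ ∂ν|)
        ≤ ∫ x in A, F ε x ∂ν := by
    filter_upwards [self_mem_nhdsWithin] with ε (hε : 0 < ε)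
    have hFnonnegA : 0 ≤ᵐ[ν.restrict A] F ε := by
      filter_upwards [hpos] with x hx
      have h1 : (max (f x) ε)⁻¹ ≤ (f x)⁻¹ := inv_anti₀ hx (le_max_left _ _)
      simp only [Pi.zero_apply, hF]; linarith
    have hFint : IntegrableOn (F ε) A ν := by
      apply Integrable.sub hint
      apply Measure.integrableOn_of_bounded (M := ε⁻¹) (measure_ne_top ν A)
        ((hf.max measurable_const).inv.aestronglyMeasurable)
      filter_upwards with x
      simp only [Pi.inv_apply]
      rw [Real.norm_eq_abs, abs_of_nonneg (inv_nonneg.2 (le_max_of_le_right hε.le))]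
      exact inv_anti₀ hε (le_max_right _ _)
    have hgnn : 0 ≤ ∫ x in A, F ε x ∂ν := integral_nonneg_of_ae hFnonnegA
    apply Real.iSup_le _ hgnn
    rintro ⟨⟨t₁, t₂⟩, ht⟩
    simp only
    obtain ⟨ht1, ht2⟩ := ht
    set R : Set (ℝ × ℝ) := Set.Ioc s t₁ ×ˢ Set.Ioc s t₂ with hR
    have hRsub : R ⊆ A := Set.prod_mono (Set.Ioc_subset_Ioc_right ht1.2)
      (Set.Ioc_subset_Ioc_right ht2.2)
    have hRm : MeasurableSet R := (measurableSet_Ioc.prod measurableSet_Ioc)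
    have hint1 : IntegrableOn (fun x => (f x)⁻¹) R ν := hint.mono_set hRsub
    have hint2 : IntegrableOn (fun x => (max (f x) ε)⁻¹) R ν := by
      apply Measure.integrableOn_of_bounded (M := ε⁻¹) (measure_ne_top ν R)
        ((hf.max measurable_const).inv.aestronglyMeasurable)
      filter_upwards with x
      simp only [Pi.inv_apply]
      rw [Real.norm_eq_abs, abs_of_nonneg (inv_nonneg.2 (le_max_of_le_right hε.le))]
      exact inv_anti₀ hε (le_max_right _ _)
    have heq : (∫ x in R, (max (f x) ε)⁻¹ ∂ν) - ∫ x in R, (f x)⁻¹ ∂ν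
        = - ∫ x in R, F ε x ∂ν := by
      rw [← integral_sub hint2 hint1, ← integral_neg]
      congr 1; ext x; simp [hF]
    rw [heq, abs_neg]
    have hRnonneg : 0 ≤ᵐ[ν.restrict R] F ε :=
      ae_restrict_of_ae_restrict_of_subset hRsub hFnonnegA
    rw [abs_of_nonneg (integral_nonneg_of_ae hRnonneg)]
    exact setIntegral_mono_set hFint hFnonnegA (HasSubset.Subset.eventuallyLE hRsub)
  have key0 : ∀ᶠ ε in 𝓝[>] (0:ℝ), (0:ℝ) ≤
      ⨆ t : (Set.Icc s τ₁ ×ˢ Set.Icc s τ₂ : Set (ℝ × ℝ)),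
        |(∫ x in Set.Ioc s (t : ℝ × ℝ).1 ×ˢ Set.Ioc s (t : ℝ × ℝ).2, (max (f x) ε)⁻¹ ∂ν)
          - ∫ x in Set.Ioc s (t : ℝ × ℝ).1 ×ˢ Set.Ioc s (t : ℝ × ℝ).2, (f x)⁻¹ ∂ν| := by
    filter_upwards with ε
    exact Real.iSup_nonneg fun t => abs_nonneg _
  exact tendsto_of_tendsto_of_tendsto_of_le_of_le' tendsto_const_nhds hg key0 key
end

section
/- Let (Ω, 𝒜, μ) be a probability space, let a ≤ b be real numbers, and let X : ℕ → Ω → (ℝ → ℝ) be a sequence of random functions that are independent and identically distributed (as random elements of ℝ → ℝ with the product σ-algebra, each evaluation ω ↦ X n ω t being measurable). Assume that for every n and every ω, the path t ↦ X n ω t is nonnegative and monotone (nondecreasing), and that ω ↦ X 0 ω b is μ-integrable. Define F(t) := ∫ X 0 ω t dμ(ω). Then for μ-almost every ω, sup_{t ∈ [a,b]} | (1/n) Σ_{m=0}^{n−1} X m ω t − F(t) | → 0 as n → ∞. -/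
open Filter Topology MeasureTheory ProbabilityTheory

lemma slln_comp {Ω : Type*} [MeasurableSpace Ω] {μ : Measure Ω}
    {X : ℕ → Ω → (ℝ → ℝ)}
    (hX_indep : iIndepFun X μ)
    (hX_ident : ∀ n, IdentDistrib (X n) (X 0) μ μ)
    (g : (ℝ → ℝ) → ℝ) (hg : Measurable g)
    (hint : Integrable (fun ω => g (X 0 ω)) μ) :
    ∀ᵐ ω ∂μ, Tendsto (fun n : ℕ => (n : ℝ)⁻¹ * ∑ m ∈ Finset.range n, g (X m ω))
      atTop (𝓝 (∫ ω, g (X 0 ω) ∂μ)) := by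
  have h := strong_law_ae_real (fun n ω => g (X n ω)) hint
    (fun i j hij => (hX_indep.indepFun hij).comp hg hg)
    (fun n => (hX_ident n).comp hg)
  filter_upwards [h] with ω hω
  simpa [div_eq_inv_mul] using hω

-- deterministic grid facts for a monotone-on-(-∞,b] function F
section Grid
variable {F : ℝ → ℝ} {a b δ : ℝ}

lemma grid_stuff (hab : a ≤ b) (hδ : 0 < δ)
    (hFmono : ∀ s t : ℝ, s ≤ t → t ≤ b → F s ≤ F t) :
    ∃ (k : ℕ) (T : ℕ → ℝ),
      T 0 = a ∧ T k = b ∧ (∀ i, T i ∈ Set.Icc a b) ∧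
      (∀ i s, 0 < i → s < T i → s ≤ b → F s < F a + i * δ) ∧
      (∀ i s, T i < s → s ≤ b → F a + i * δ ≤ F s) := by
  obtain ⟨k, hk⟩ : ∃ k : ℕ, F b - F a < k * δ := by
    obtain ⟨k, hk⟩ := exists_nat_gt ((F b - F a) / δ)
    exact ⟨k, by rwa [div_lt_iff₀ hδ] at hk⟩
  set SS : ℕ → Set ℝ := fun i => {s ∈ Set.Icc a b | F a + i * δ ≤ F s} ∪ {b} with hSS
  have hSSb : ∀ i, b ∈ SS i := fun i => Or.inr rfl
  have hSSsub : ∀ i, SS i ⊆ Set.Icc a b := by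
    rintro i s (⟨hs, _⟩ | hs)
    · exact hs
    · rw [Set.mem_singleton_iff.1 hs]; exact ⟨hab, le_refl b⟩
  have hbdd : ∀ i, BddBelow (SS i) := fun i => ⟨a, fun s hs => (hSSsub i hs).1⟩
  set T : ℕ → ℝ := fun i => sInf (SS i) with hT
  have hTmem : ∀ i, T i ∈ Set.Icc a b := fun i =>
    ⟨le_csInf ⟨b, hSSb i⟩ (fun s hs => (hSSsub i hs).1), csInf_le (hbdd i) (hSSb i)⟩
  refine ⟨k, T, ?_, ?_, hTmem, ?_, ?_⟩
  · refine le_antisymm (csInf_le (hbdd 0) (Or.inl ⟨⟨le_refl a, hab⟩, by simp⟩)) (hTmem 0).1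
  · refine le_antisymm (hTmem k).2 (le_csInf ⟨b, hSSb k⟩ ?_)
    rintro s (⟨hs, hFs⟩ | hs)
    · exfalso
      have : F s ≤ F b := hFmono s b hs.2 le_rfl
      linarith
    · exact (Set.mem_singleton_iff.1 hs).ge
  · intro i s hi hsT hsb
    rcases lt_or_ge s a with h | h
    · have : F s ≤ F a := hFmono s a h.le hab
      have : (0:ℝ) < i * δ := by positivity
      linarith
    · by_contra hcon
      push_neg at hcon
      exact absurd (csInf_le (hbdd i) (Or.inl ⟨⟨h, hsb⟩, hcon⟩)) (not_le.2 hsT)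
  · intro i s hTs hsb
    obtain ⟨r, hr, hrs⟩ := exists_lt_of_csInf_lt ⟨b, hSSb i⟩ hTs
    rcases hr with ⟨hr, hFr⟩ | hr
    · exact hFr.trans (hFmono r s hrs.le hsb)
    · rw [Set.mem_singleton_iff] at hr
      rw [hr] at hrs
      exact absurd hrs (not_lt.2 hsb)
end Grid

noncomputable def gLf (s : ℝ) (f : ℝ → ℝ) : ℝ := ⨆ q : {q : ℚ // (q : ℝ) < s}, f q
noncomputable def gRf (b s : ℝ) (f : ℝ → ℝ) : ℝ :=
  ⨅ q : {q : ℚ // s < (q : ℝ) ∧ (q : ℝ) < b}, f q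
instance instNEL (s : ℝ) : Nonempty {q : ℚ // (q : ℝ) < s} :=
  let ⟨q, hq⟩ := exists_rat_lt s; ⟨⟨q, hq⟩⟩
lemma instNER {s b : ℝ} (h : s < b) : Nonempty {q : ℚ // s < (q : ℝ) ∧ (q : ℝ) < b} :=
  let ⟨q, hq1, hq2⟩ := exists_rat_btwn h; ⟨⟨q, hq1, hq2⟩⟩
lemma gLf_measurable (s : ℝ) : Measurable (gLf s) :=
  Measurable.iSup fun q => measurable_pi_apply _
lemma gRf_measurable (b s : ℝ) : Measurable (gRf b s) :=
  Measurable.iInf fun q => measurable_pi_apply _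
lemma gLf_bdd {f : ℝ → ℝ} (hf : Monotone f) {s b : ℝ} (hsb : s ≤ b) :
    BddAbove (Set.range fun q : {q : ℚ // (q : ℝ) < s} => f q) := by
  refine ⟨f b, ?_⟩; rintro _ ⟨q, rfl⟩
  exact hf (le_of_lt (lt_of_lt_of_le q.2 hsb))
lemma le_gLf {f : ℝ → ℝ} (hf : Monotone f) {s b t : ℝ} (hsb : s ≤ b) (ht : t < s) :
    f t ≤ gLf s f := by
  obtain ⟨q, hq1, hq2⟩ := exists_rat_btwn ht
  exact (hf hq1.le).trans (le_ciSup (gLf_bdd hf hsb) ⟨q, hq2⟩)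
lemma gLf_le {f : ℝ → ℝ} (hf : Monotone f) {s b : ℝ} (hsb : s ≤ b) : gLf s f ≤ f b :=
  ciSup_le fun q => hf (le_of_lt (lt_of_lt_of_le q.2 hsb))
lemma gLf_nonneg {f : ℝ → ℝ} (hf : Monotone f) (hnn : ∀ t, 0 ≤ f t) {s b : ℝ}
    (hsb : s ≤ b) : 0 ≤ gLf s f := by
  obtain ⟨q⟩ := instNEL s
  exact (hnn q).trans (le_ciSup (gLf_bdd hf hsb) q)
lemma gRf_bddBelow {f : ℝ → ℝ} (hnn : ∀ t, 0 ≤ f t) (b s : ℝ) :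
    BddBelow (Set.range fun q : {q : ℚ // s < (q : ℝ) ∧ (q : ℝ) < b} => f q) := by
  refine ⟨0, ?_⟩; rintro _ ⟨q, rfl⟩; exact hnn _
lemma gRf_le {f : ℝ → ℝ} (hf : Monotone f) (hnn : ∀ t, 0 ≤ f t) {b s t : ℝ}
    (hst : s < t) (htb : t ≤ b) : gRf b s f ≤ f t := by
  obtain ⟨q, hq1, hq2⟩ := exists_rat_btwn hst
  exact (ciInf_le (gRf_bddBelow hnn b s) ⟨q, hq1, lt_of_lt_of_le hq2 htb⟩).trans (hf hq2.le)
lemma gRf_nonneg {f : ℝ → ℝ} (hnn : ∀ t, 0 ≤ f t) {b s : ℝ} (h : s < b) :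
    0 ≤ gRf b s f := by
  haveI := instNER h
  exact le_ciInf fun q => hnn _

section Integrals
variable {Ω : Type*} [MeasurableSpace Ω] {μ : Measure Ω} {X : ℕ → Ω → (ℝ → ℝ)} {b : ℝ}
  (hXm : Measurable (X 0)) (hmono : ∀ ω, Monotone (X 0 ω)) (hnn : ∀ ω t, 0 ≤ X 0 ω t)
  (hint : Integrable (fun ω => X 0 ω b) μ)

include hXm hmono hnn hint

lemma int_eval {t : ℝ} (htb : t ≤ b) : Integrable (fun ω => X 0 ω t) μ := by
  refine hint.mono ((measurable_pi_apply t).comp hXm).aestronglyMeasurable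
    (ae_of_all _ fun ω => ?_)
  rw [Real.norm_eq_abs, Real.norm_eq_abs, abs_of_nonneg (hnn ω t), abs_of_nonneg (hnn ω b)]
  exact hmono ω htb

lemma int_gLf {s : ℝ} (hsb : s ≤ b) : Integrable (fun ω => gLf s (X 0 ω)) μ := by
  refine hint.mono ((gLf_measurable s).comp hXm).aestronglyMeasurable
    (ae_of_all _ fun ω => ?_)
  rw [Real.norm_eq_abs, Real.norm_eq_abs, abs_of_nonneg (gLf_nonneg (hmono ω) (hnn ω) hsb),
    abs_of_nonneg (hnn ω b)]
  exact gLf_le (hmono ω) hsb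

lemma int_gRf {s : ℝ} (hsb : s < b) : Integrable (fun ω => gRf b s (X 0 ω)) μ := by
  refine hint.mono ((gRf_measurable b s).comp hXm).aestronglyMeasurable
    (ae_of_all _ fun ω => ?_)
  rw [Real.norm_eq_abs, Real.norm_eq_abs, abs_of_nonneg (gRf_nonneg (hnn ω) hsb),
    abs_of_nonneg (hnn ω b)]
  exact gRf_le (hmono ω) (hnn ω) hsb le_rfl

lemma integral_gLf_le {s c : ℝ} (hsb : s ≤ b)
    (H : ∀ q : ℚ, (q : ℝ) < s → ∫ ω, X 0 ω (q : ℝ) ∂μ ≤ c) :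
    ∫ ω, gLf s (X 0 ω) ∂μ ≤ c := by
  have hpos : ∀ n : ℕ, (0:ℝ) < 1 / (n + 1) := fun n => by positivity
  have hch : ∀ n : ℕ, ∃ q : ℚ, s - 1 / (n + 1) < (q:ℝ) ∧ (q:ℝ) < s := by
    intro n
    obtain ⟨q, hq1, hq2⟩ := exists_rat_btwn (show s - 1 / (n + 1) < s by linarith [hpos n])
    exact ⟨q, hq1, hq2⟩
  choose q hq1 hq2 using hch
  set r : ℕ → ℚ := fun n => (Finset.range (n + 1)).sup' Finset.nonempty_range_add_one q
    with hr
  have hrlt : ∀ n, (r n : ℝ) < s := by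
    intro n
    obtain ⟨j, -, hje⟩ := Finset.exists_mem_eq_sup'
      (s := Finset.range (n + 1)) Finset.nonempty_range_add_one q
    rw [show r n = q j from hje]; exact hq2 j
  have hqr : ∀ n, q n ≤ r n := fun n => Finset.le_sup' q (Finset.self_mem_range_succ n)
  have hrmono : Monotone fun n => (r n : ℝ) := by
    intro m n h
    rw [Rat.cast_le]
    refine Finset.sup'_le _ q fun j hj => Finset.le_sup' q ?_
    exact Finset.mem_range.2 (lt_of_lt_of_le (Finset.mem_range.1 hj) (by omega))
  have h_tendsto : ∀ ω, Monotone (X 0 ω) → Tendsto (fun n => X 0 ω (r n)) atTop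
      (𝓝 (gLf s (X 0 ω))) := by
    intro ω hm
    have hb : BddAbove (Set.range fun n => X 0 ω (r n)) := by
      refine ⟨X 0 ω b, ?_⟩; rintro _ ⟨n, rfl⟩
      exact hm ((hrlt n).le.trans hsb)
    have h1 := tendsto_atTop_ciSup (fun m n h => hm (hrmono h)) hb
    have h2 : (⨆ n, X 0 ω (r n)) = gLf s (X 0 ω) := by
      refine le_antisymm (ciSup_le fun n => le_ciSup (gLf_bdd hm hsb) ⟨r n, hrlt n⟩) ?_
      refine ciSup_le ?_
      rintro ⟨qq, hqq⟩
      obtain ⟨n, hn⟩ := exists_nat_one_div_lt (sub_pos.2 hqq)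
      have : (qq : ℝ) ≤ (r n : ℝ) := by
        have h3 := hq1 n
        have h4 : (q n : ℝ) ≤ (r n : ℝ) := Rat.cast_le.2 (hqr n)
        linarith
      exact (hm this).trans (le_ciSup hb n)
    rwa [h2] at h1
  have hMCT := integral_tendsto_of_tendsto_of_monotone
    (f := fun n ω => X 0 ω (r n)) (F := fun ω => gLf s (X 0 ω))
    (fun n => int_eval hXm hmono hnn hint ((hrlt n).le.trans hsb))
    (int_gLf hXm hmono hnn hint hsb)
    (ae_of_all _ fun ω m n h => hmono ω (hrmono h))
    (ae_of_all _ fun ω => h_tendsto ω (hmono ω))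
  exact le_of_tendsto hMCT (Eventually.of_forall fun n => H (r n) (hrlt n))

lemma le_integral_gRf {s c : ℝ} (hsb : s < b)
    (H : ∀ q : ℚ, s < (q : ℝ) → (q : ℝ) < b → c ≤ ∫ ω, X 0 ω (q : ℝ) ∂μ) :
    c ≤ ∫ ω, gRf b s (X 0 ω) ∂μ := by
  have hpos : ∀ n : ℕ, (0:ℝ) < 1 / (n + 1) := fun n => by positivity
  have hch : ∀ n : ℕ, ∃ q : ℚ, s < (q:ℝ) ∧ (q:ℝ) < min (s + 1 / (n + 1)) b := by
    intro n
    obtain ⟨q, hq1, hq2⟩ := exists_rat_btwn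
      (show s < min (s + 1 / (n + 1)) b by
        exact lt_min (by linarith [hpos n]) hsb)
    exact ⟨q, hq1, hq2⟩
  choose q hq1 hq2 using hch
  set r : ℕ → ℚ := fun n => (Finset.range (n + 1)).inf' Finset.nonempty_range_add_one q
    with hr
  have hrmem : ∀ n, s < (r n : ℝ) ∧ (r n : ℝ) < b := by
    intro n
    obtain ⟨j, -, hje⟩ := Finset.exists_mem_eq_inf'
      (s := Finset.range (n + 1)) Finset.nonempty_range_add_one q
    rw [show r n = q j from hje]
    exact ⟨hq1 j, lt_of_lt_of_le (hq2 j) (min_le_right _ _)⟩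
  have hqr : ∀ n, r n ≤ q n := fun n => Finset.inf'_le q (Finset.self_mem_range_succ n)
  have hranti : Antitone fun n => (r n : ℝ) := by
    intro m n h
    rw [Rat.cast_le]
    refine Finset.le_inf' _ q fun j hj => Finset.inf'_le q ?_
    exact Finset.mem_range.2 (lt_of_lt_of_le (Finset.mem_range.1 hj) (by omega))
  have h_tendsto : ∀ ω, Monotone (X 0 ω) → Tendsto (fun n => X 0 ω (r n)) atTop
      (𝓝 (gRf b s (X 0 ω))) := by
    intro ω hm
    have hb : BddBelow (Set.range fun n => X 0 ω (r n)) := by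
      refine ⟨0, ?_⟩; rintro _ ⟨n, rfl⟩; exact hnn ω _
    have h1 := tendsto_atTop_ciInf (fun m n h => hm (hranti h)) hb
    have h2 : (⨅ n, X 0 ω (r n)) = gRf b s (X 0 ω) := by
      refine le_antisymm ?_
        (le_ciInf fun n => ciInf_le (gRf_bddBelow (hnn ω) b s) ⟨r n, hrmem n⟩)
      haveI := instNER hsb
      refine le_ciInf ?_
      rintro ⟨qq, hqq1, hqq2⟩
      obtain ⟨n, hn⟩ := exists_nat_one_div_lt (sub_pos.2 hqq1)
      have : (r n : ℝ) ≤ (qq : ℝ) := by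
        have h3 := (hq2 n).trans_le (min_le_left _ _)
        have h4 : (r n : ℝ) ≤ (q n : ℝ) := Rat.cast_le.2 (hqr n)
        linarith
      exact (ciInf_le hb n).trans (hm this)
    rwa [h2] at h1
  have hMCT := integral_tendsto_of_tendsto_of_antitone
    (f := fun n ω => X 0 ω (r n)) (F := fun ω => gRf b s (X 0 ω))
    (fun n => int_eval hXm hmono hnn hint (hrmem n).2.le)
    (int_gRf hXm hmono hnn hint hsb)
    (ae_of_all _ fun ω m n h => hmono ω (hranti h))
    (ae_of_all _ fun ω => h_tendsto ω (hmono ω))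
  exact ge_of_tendsto hMCT (Eventually.of_forall fun n => H (r n) (hrmem n).1 (hrmem n).2)

end Integrals


lemma gc_key {Ω : Type*} [MeasurableSpace Ω] (μ : Measure Ω) [IsProbabilityMeasure μ]
    (a b : ℝ) (hab : a ≤ b)
    (X : ℕ → Ω → (ℝ → ℝ))
    (hX_meas : ∀ n, Measurable (X n))
    (hX_indep : iIndepFun X μ)
    (hX_ident : ∀ n, IdentDistrib (X n) (X 0) μ μ)
    (hX_nonneg : ∀ n, ∀ ω, ∀ t : ℝ, 0 ≤ X n ω t)
    (hX_mono : ∀ n, ∀ ω, Monotone (X n ω))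
    (hX_int : Integrable (fun ω => X 0 ω b) μ)
    (F : ℝ → ℝ) (hF : ∀ t : ℝ, F t = ∫ ω, X 0 ω t ∂μ)
    (δ : ℝ) (hδ : 0 < δ) :
    ∀ᵐ ω ∂μ, ∀ᶠ n : ℕ in atTop, ∀ t ∈ Set.Icc a b,
      |(n : ℝ)⁻¹ * ∑ m ∈ Finset.range n, X m ω t - F t| ≤ 2 * δ := by
  have hmono0 := hX_mono 0
  have hnn0 := hX_nonneg 0
  have hFmono : ∀ s t : ℝ, s ≤ t → t ≤ b → F s ≤ F t := by
    intro s t hst htb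
    rw [hF s, hF t]
    exact integral_mono (int_eval (hX_meas 0) hmono0 hnn0 hX_int (hst.trans htb))
      (int_eval (hX_meas 0) hmono0 hnn0 hX_int htb) fun ω => hmono0 ω hst
  obtain ⟨k, T, hT0, hTk, hTmem, hP4, hP5⟩ := grid_stuff hab hδ hFmono
  have hAE : ∀ᵐ ω ∂μ, ∀ i : ℕ,
      Tendsto (fun n : ℕ => (n:ℝ)⁻¹ * ∑ m ∈ Finset.range n, X m ω (T i)) atTop
        (𝓝 (∫ ω', X 0 ω' (T i) ∂μ))
      ∧ Tendsto (fun n : ℕ => (n:ℝ)⁻¹ * ∑ m ∈ Finset.range n, gLf (T i) (X m ω)) atTop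
          (𝓝 (∫ ω', gLf (T i) (X 0 ω') ∂μ))
      ∧ (T i < b → Tendsto (fun n : ℕ =>
            (n:ℝ)⁻¹ * ∑ m ∈ Finset.range n, gRf b (T i) (X m ω)) atTop
          (𝓝 (∫ ω', gRf b (T i) (X 0 ω') ∂μ))) := by
    rw [MeasureTheory.ae_all_iff]
    intro i
    have h1 := slln_comp hX_indep hX_ident (fun f => f (T i)) (measurable_pi_apply _)
      (int_eval (hX_meas 0) hmono0 hnn0 hX_int (hTmem i).2)
    have h2 := slln_comp hX_indep hX_ident (gLf (T i)) (gLf_measurable _)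
      (int_gLf (hX_meas 0) hmono0 hnn0 hX_int (hTmem i).2)
    have h3 : ∀ᵐ ω ∂μ, (T i < b → Tendsto (fun n : ℕ =>
          (n:ℝ)⁻¹ * ∑ m ∈ Finset.range n, gRf b (T i) (X m ω)) atTop
        (𝓝 (∫ ω', gRf b (T i) (X 0 ω') ∂μ))) := by
      by_cases hib : T i < b
      · exact (slln_comp hX_indep hX_ident (gRf b (T i)) (gRf_measurable _ _)
          (int_gRf (hX_meas 0) hmono0 hnn0 hX_int hib)).mono fun ω h _ => h
      · exact Eventually.of_forall fun ω h' => absurd h' hib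
    filter_upwards [h1, h2, h3] with ω e1 e2 e3
    exact ⟨e1, e2, e3⟩
  have hcL : ∀ i : ℕ, 0 < i → ∫ ω, gLf (T i) (X 0 ω) ∂μ ≤ F a + i * δ := by
    intro i hi
    refine integral_gLf_le (hX_meas 0) hmono0 hnn0 hX_int (hTmem i).2 fun q hq => ?_
    rw [← hF]
    exact (hP4 i q hi hq (hq.le.trans (hTmem i).2)).le
  have hcR : ∀ i : ℕ, T i < b → F a + i * δ ≤ ∫ ω, gRf b (T i) (X 0 ω) ∂μ := by
    intro i hi
    refine le_integral_gRf (hX_meas 0) hmono0 hnn0 hX_int hi fun q hq1 hq2 => ?_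
    rw [← hF]
    exact hP5 i q hq1 hq2.le
  filter_upwards [hAE] with ω hω
  have hev : ∀ᶠ n : ℕ in atTop, ∀ i ∈ Finset.range (k + 1),
      (|(n:ℝ)⁻¹ * ∑ m ∈ Finset.range n, X m ω (T i) - F (T i)| ≤ δ
      ∧ (n:ℝ)⁻¹ * ∑ m ∈ Finset.range n, gLf (T i) (X m ω)
          ≤ (∫ ω', gLf (T i) (X 0 ω') ∂μ) + δ
      ∧ (T i < b → (∫ ω', gRf b (T i) (X 0 ω') ∂μ) - δ
          ≤ (n:ℝ)⁻¹ * ∑ m ∈ Finset.range n, gRf b (T i) (X m ω))) := by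
    rw [Filter.eventually_all_finset]
    intro i _
    have e1 : ∀ᶠ n : ℕ in atTop,
        |(n:ℝ)⁻¹ * ∑ m ∈ Finset.range n, X m ω (T i) - F (T i)| ≤ δ := by
      have := (hω i).1.eventually (eventually_abs_sub_lt (∫ ω', X 0 ω' (T i) ∂μ) hδ)
      rw [← hF] at this
      exact this.mono fun n h => h.le
    have e2 := (hω i).2.1.eventually
      (eventually_le_nhds (lt_add_of_pos_right (∫ ω', gLf (T i) (X 0 ω') ∂μ) hδ))
    have e3 : ∀ᶠ n : ℕ in atTop, (T i < b → (∫ ω', gRf b (T i) (X 0 ω') ∂μ) - δ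
        ≤ (n:ℝ)⁻¹ * ∑ m ∈ Finset.range n, gRf b (T i) (X m ω)) := by
      by_cases hib : T i < b
      · exact (((hω i).2.2 hib).eventually
          (eventually_ge_nhds (by linarith : (∫ ω', gRf b (T i) (X 0 ω') ∂μ) - δ
            < ∫ ω', gRf b (T i) (X 0 ω') ∂μ))).mono fun n h _ => h
      · exact Eventually.of_forall fun n h' => absurd h' hib
    filter_upwards [e1, e2, e3] with n f1 f2 f3
    exact ⟨f1, f2, f3⟩
  filter_upwards [hev] with n hn
  intro t ht
  by_cases hgrid : ∃ j, j ≤ k ∧ t = T j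
  · obtain ⟨j, hjk, rfl⟩ := hgrid
    have := (hn j (Finset.mem_range.2 (Nat.lt_succ_of_le hjk))).1
    linarith [abs_nonneg ((n:ℝ)⁻¹ * ∑ m ∈ Finset.range n, X m ω (T j) - F (T j))]
  · push_neg at hgrid
    set s0 : Finset ℕ := (Finset.range (k + 1)).filter (fun j => T j ≤ t) with hs0
    have hne : s0.Nonempty := by
      refine ⟨0, Finset.mem_filter.2 ⟨Finset.mem_range.2 k.succ_pos, ?_⟩⟩
      rw [hT0]; exact ht.1
    set i : ℕ := s0.max' hne with hi
    have him := s0.max'_mem hne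
    rw [Finset.mem_filter, Finset.mem_range] at him
    have hik : i ≤ k := Nat.lt_succ_iff.1 him.1
    have hTi_lt : T i < t := lt_of_le_of_ne him.2 fun h => hgrid i hik h.symm
    have hiltk : i < k := by
      rcases lt_or_eq_of_le hik with h | h
      · exact h
      · exfalso
        have hbt : b ≤ t := by rw [← hTk, ← h]; exact him.2
        exact hgrid k le_rfl (le_antisymm ht.2 hbt ▸ hTk.symm)
    have ht_lt : t < T (i + 1) := by
      by_contra hcon
      push_neg at hcon
      have : i + 1 ∈ s0 := Finset.mem_filter.2
        ⟨Finset.mem_range.2 (Nat.succ_lt_succ hiltk), hcon⟩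
      exact absurd (s0.le_max' _ this) (by omega)
    have hTib : T i < b := lt_of_lt_of_le hTi_lt ht.2
    have hnn' : (0:ℝ) ≤ (n:ℝ)⁻¹ := inv_nonneg.2 (Nat.cast_nonneg n)
    have hub : (n:ℝ)⁻¹ * ∑ m ∈ Finset.range n, X m ω t
        ≤ (n:ℝ)⁻¹ * ∑ m ∈ Finset.range n, gLf (T (i+1)) (X m ω) :=
      mul_le_mul_of_nonneg_left (Finset.sum_le_sum fun m _ =>
        le_gLf (hX_mono m ω) (hTmem (i+1)).2 ht_lt) hnn'
    have hlb : (n:ℝ)⁻¹ * ∑ m ∈ Finset.range n, gRf b (T i) (X m ω)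
        ≤ (n:ℝ)⁻¹ * ∑ m ∈ Finset.range n, X m ω t :=
      mul_le_mul_of_nonneg_left (Finset.sum_le_sum fun m _ =>
        gRf_le (hX_mono m ω) (hX_nonneg m ω) hTi_lt ht.2) hnn'
    have h2 := (hn (i+1) (Finset.mem_range.2 (Nat.succ_lt_succ hiltk))).2.1
    have h3 := (hn i (Finset.mem_range.2 (Nat.lt_succ_of_le hik))).2.2 hTib
    have hcLi := hcL (i+1) i.succ_pos
    have hcRi := hcR i hTib
    have hFlb := hP5 i t hTi_lt ht.2
    have hFub := hP4 (i+1) t i.succ_pos ht_lt ht.2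
    rw [abs_le]
    push_cast at hcLi hFub ⊢
    constructor <;> linarith

set_option maxHeartbeats 1000000 in
/-- Almost-sure uniform law of large numbers for i.i.d. monotone random functions
(Glivenko–Cantelli theorem for monotone processes, not assuming continuity of the limit):
if the paths are nonnegative and nondecreasing and the value at the right endpoint is
integrable, then the empirical means converge uniformly on `[a,b]` to the mean function,
almost surely. -/
theorem glivenko_cantelli_monotone
    {Ω : Type*} [MeasurableSpace Ω] (μ : Measure Ω) [IsProbabilityMeasure μ]
    (a b : ℝ) (hab : a ≤ b)
    (X : ℕ → Ω → (ℝ → ℝ))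
    (hX_meas : ∀ n, Measurable (X n))
    (hX_indep : iIndepFun X μ)
    (hX_ident : ∀ n, IdentDistrib (X n) (X 0) μ μ)
    (hX_nonneg : ∀ n, ∀ ω, ∀ t : ℝ, 0 ≤ X n ω t)
    (hX_mono : ∀ n, ∀ ω, Monotone (X n ω))
    (hX_int : Integrable (fun ω => X 0 ω b) μ)
    (F : ℝ → ℝ) (hF : ∀ t : ℝ, F t = ∫ ω, X 0 ω t ∂μ) :
    ∀ᵐ ω ∂μ,
      Tendsto (fun n : ℕ => ⨆ t : Set.Icc a b,
        |(n : ℝ)⁻¹ * ∑ m ∈ Finset.range n, X m ω t - F t|) atTop (𝓝 0) := by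
  haveI : Nonempty (Set.Icc a b) := (Set.nonempty_Icc.2 hab).to_subtype
  have h : ∀ᵐ ω ∂μ, ∀ j : ℕ, ∀ᶠ n : ℕ in atTop, ∀ t ∈ Set.Icc a b,
      |(n : ℝ)⁻¹ * ∑ m ∈ Finset.range n, X m ω t - F t| ≤ 2 * (1 / (j + 1)) := by
    rw [MeasureTheory.ae_all_iff]
    intro j
    exact gc_key μ a b hab X hX_meas hX_indep hX_ident hX_nonneg hX_mono hX_int F hF
      (1 / (j + 1)) (by positivity)
  filter_upwards [h] with ω hω
  rw [tendsto_order]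
  constructor
  · intro c hc
    exact Eventually.of_forall fun n =>
      lt_of_lt_of_le hc (Real.iSup_nonneg fun t => abs_nonneg _)
  · intro c hc
    obtain ⟨j, hj⟩ := exists_nat_gt (2 / c)
    have hjc : 2 * ((1:ℝ) / (j + 1)) < c := by
      have h1 : (2:ℝ) / c < j + 1 := hj.trans (lt_add_one _)
      have h2 : (0:ℝ) < j + 1 := by positivity
      rw [div_lt_iff₀ hc] at h1
      rw [mul_one_div, div_lt_iff₀ h2]
      linarith
    filter_upwards [hω j] with n hn
    exact lt_of_le_of_lt (ciSup_le fun t => hn t.1 t.2) hjc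
end
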